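/- arXiv:2010.01228 — 9 statements merged into one kernel-verified Lean document; each statement's English description precedes it below -/
import Mathlib

section
/- Let n > 2 be an integer. If H is a 3-uniform hypergraph of order n with clique number ω(H) = n − 2 = k ≥ 3 such that the intersection of all maximum cliques of H is empty, then n ≤ 6. -/
/-- `S` is a clique of the 3-uniform hypergraph with edge set `E`:
every 3-element subset of `S` is an edge. -/
def IsClique3 {α : Type*} (E : Finset (Finset α)) (S : Finset α) : Prop :=
  ∀ t : Finset α, t ⊆ S → t.card = 3 → t ∈ E

/-- The Szemerédi–Petruska conjecture for m = 2. -/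
theorem szemeredi_petruska_m_two {α : Type*} [Fintype α] [DecidableEq α]
    (n k : ℕ) (hnm : 2 < n)
    (E : Finset (Finset α)) (hE : ∀ e ∈ E, e.card = 3)
    (horder : Fintype.card α = n)
    (hk : k = n - 2) (hk3 : 3 ≤ k)
    (homega_le : ∀ S : Finset α, IsClique3 E S → S.card ≤ k)
    (homega_ex : ∃ S : Finset α, IsClique3 E S ∧ S.card = k)
    (hempty : ∀ v : α, ∃ S : Finset α, IsClique3 E S ∧ S.card = k ∧ v ∉ S) :
    n ≤ 6 := by
  by_contra hn6
  push_neg at hn6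
  have hn7 : 7 ≤ n := hn6
  -- For each vertex choose a maximum clique avoiding it
  have hSv1 : ∀ v, IsClique3 E ((hempty v).choose) := fun v => (hempty v).choose_spec.1
  have hSv2 : ∀ v, ((hempty v).choose).card = k := fun v => (hempty v).choose_spec.2.1
  have hSv3 : ∀ v, v ∉ (hempty v).choose := fun v => (hempty v).choose_spec.2.2
  set Sv : α → Finset α := fun v => (hempty v).choose with hSvdef
  have hDcard : ∀ v, (Sv v)ᶜ.card = 2 := by
    intro v
    rw [Finset.card_compl, hSv2 v, horder]
    omega
  have hvD : ∀ v, v ∈ (Sv v)ᶜ := fun v => Finset.mem_compl.mpr (hSv3 v)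
  -- every non-edge triple meets every complement pair
  have hmeets : ∀ (t : Finset α), t.card = 3 → t ∉ E → ∀ v : α,
      ((Sv v)ᶜ ∩ t).Nonempty := by
    intro t ht htE v
    rcases Finset.eq_empty_or_nonempty ((Sv v)ᶜ ∩ t) with h | h
    · exfalso
      apply htE
      apply hSv1 v t _ ht
      intro x hx
      by_contra hxS
      have hmem : x ∈ (Sv v)ᶜ ∩ t := Finset.mem_inter.mpr ⟨Finset.mem_compl.mpr hxS, hx⟩
      rw [h] at hmem
      exact absurd hmem (Finset.notMem_empty x)
    · exact h
  -- a set of cardinality 2 containing two distinct elements equals the pair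
  have paireq : ∀ (v a b : α), a ≠ b → a ∈ (Sv v)ᶜ → b ∈ (Sv v)ᶜ → (Sv v)ᶜ = {a, b} := by
    intro v a b hab ha hb
    symm
    apply Finset.eq_of_subset_of_card_le
    · intro x hx
      rcases Finset.mem_insert.mp hx with h | h
      · exact h ▸ ha
      · exact (Finset.mem_singleton.mp h) ▸ hb
    · rw [hDcard v, Finset.card_pair hab]
  -- key lemma: two complement pairs sharing a vertex give a non-edge avoiding it
  have lemL : ∀ (s z1 z2 : α), z1 ≠ s → z2 ≠ s →
      (Sv z1)ᶜ = {z1, s} → (Sv z2)ᶜ = {z2, s} →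
      ∃ t : Finset α, t.card = 3 ∧ t ∉ E ∧ z1 ∈ t ∧ z2 ∈ t ∧ s ∉ t := by
    intro s z1 z2 hz1s hz2s hc1 hc2
    have hTcard : ({s}ᶜ : Finset α).card = n - 1 := by
      rw [Finset.card_compl, horder, Finset.card_singleton]
    have hnotclique : ¬ IsClique3 E ({s}ᶜ : Finset α) := by
      intro hcl
      have := homega_le _ hcl
      rw [hTcard] at this
      omega
    unfold IsClique3 at hnotclique
    push_neg at hnotclique
    obtain ⟨t, htT, htcard, htE⟩ := hnotclique
    have hst : s ∉ t := by
      intro hs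
      have := htT hs
      simp at this
    have hz1t : z1 ∈ t := by
      by_contra hz1t
      apply htE
      apply hSv1 z1 t _ htcard
      intro x hx
      by_contra hxS
      have hxc : x ∈ (Sv z1)ᶜ := Finset.mem_compl.mpr hxS
      rw [hc1] at hxc
      rcases Finset.mem_insert.mp hxc with h | h
      · exact hz1t (h ▸ hx)
      · exact hst ((Finset.mem_singleton.mp h) ▸ hx)
    have hz2t : z2 ∈ t := by
      by_contra hz2t
      apply htE
      apply hSv1 z2 t _ htcard
      intro x hx
      by_contra hxS
      have hxc : x ∈ (Sv z2)ᶜ := Finset.mem_compl.mpr hxS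
      rw [hc2] at hxc
      rcases Finset.mem_insert.mp hxc with h | h
      · exact hz2t (h ▸ hx)
      · exact hst ((Finset.mem_singleton.mp h) ▸ hx)
    exact ⟨t, htcard, htE, hz1t, hz2t, hst⟩
  -- third element of a triple
  have third : ∀ (t : Finset α) (a b : α), t.card = 3 → a ∈ t → b ∈ t → a ≠ b →
      ∃ c, c ∈ t ∧ c ≠ a ∧ c ≠ b ∧ ∀ w ∈ t, w = a ∨ w = b ∨ w = c := by
    intro t a b ht ha hb hab
    have hsub : ({a, b} : Finset α) ⊆ t := by
      intro x hx
      rcases Finset.mem_insert.mp hx with h | h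
      · exact h ▸ ha
      · exact (Finset.mem_singleton.mp h) ▸ hb
    have hone : (t \ {a, b}).card = 1 := by
      rw [Finset.card_sdiff_of_subset hsub, ht, Finset.card_pair hab]
    obtain ⟨c, hc⟩ := Finset.card_eq_one.mp hone
    have hct : c ∈ t \ {a, b} := by rw [hc]; exact Finset.mem_singleton_self c
    have hcmem := (Finset.mem_sdiff.mp hct).1
    have hcnot := (Finset.mem_sdiff.mp hct).2
    refine ⟨c, hcmem, ?_, ?_, ?_⟩
    · intro h; exact hcnot (by simp [h])
    · intro h; exact hcnot (by simp [h])
    · intro w hw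
      by_cases h1 : w = a
      · exact Or.inl h1
      by_cases h2 : w = b
      · exact Or.inr (Or.inl h2)
      right; right
      have hws : w ∈ t \ {a, b} := Finset.mem_sdiff.mpr ⟨hw, by simp [h1, h2]⟩
      rw [hc] at hws
      exact Finset.mem_singleton.mp hws
  -- two disjoint non-edge triples give the final contradiction
  have final : ∀ tA tB : Finset α, tA.card = 3 → tA ∉ E → tB.card = 3 → tB ∉ E →
      Disjoint tA tB → False := by
    intro tA tB hA hAE hB hBE hdis
    have hsub : (Finset.univ : Finset α) ⊆ tA ∪ tB := by
      intro v _
      obtain ⟨a, ha⟩ := hmeets tA hA hAE v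
      obtain ⟨b, hb⟩ := hmeets tB hB hBE v
      have haD := (Finset.mem_inter.mp ha).1
      have haA := (Finset.mem_inter.mp ha).2
      have hbD := (Finset.mem_inter.mp hb).1
      have hbB := (Finset.mem_inter.mp hb).2
      have hab : a ≠ b := fun h => (Finset.disjoint_left.mp hdis haA) (h ▸ hbB)
      have hD := paireq v a b hab haD hbD
      have hv := hvD v
      rw [hD] at hv
      rcases Finset.mem_insert.mp hv with h | h
      · exact Finset.mem_union_left _ (h ▸ haA)
      · exact Finset.mem_union_right _ ((Finset.mem_singleton.mp h) ▸ hbB)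
    have h1 := Finset.card_le_card hsub
    rw [Finset.card_univ, horder] at h1
    have h2 := Finset.card_union_le tA tB
    omega
  -- there is a non-edge triple
  obtain ⟨t1, ht1c, ht1E⟩ : ∃ t : Finset α, t.card = 3 ∧ t ∉ E := by
    by_contra h
    push_neg at h
    have hcl : IsClique3 E Finset.univ := fun t _ htc => h t htc
    have := homega_le _ hcl
    rw [Finset.card_univ, horder] at this
    omega
  -- choose for each vertex an element of its pair inside t1
  have hfex : ∀ z : α, ∃ x, x ∈ (Sv z)ᶜ ∧ x ∈ t1 := by
    intro z
    obtain ⟨x, hx⟩ := hmeets t1 ht1c ht1E z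
    exact ⟨x, (Finset.mem_inter.mp hx).1, (Finset.mem_inter.mp hx).2⟩
  have hf1 : ∀ z, (hfex z).choose ∈ (Sv z)ᶜ := fun z => (hfex z).choose_spec.1
  have hf2 : ∀ z, (hfex z).choose ∈ t1 := fun z => (hfex z).choose_spec.2
  set f : α → α := fun z => (hfex z).choose with hfdef
  -- pigeonhole outside t1
  have houtcard : (Finset.univ \ t1).card = n - 3 := by
    rw [Finset.card_sdiff_of_subset (Finset.subset_univ t1), Finset.card_univ, horder, ht1c]
  obtain ⟨z1, hz1, z2, hz2, hz12, hfz⟩ :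
      ∃ z1 ∈ Finset.univ \ t1, ∃ z2 ∈ Finset.univ \ t1, z1 ≠ z2 ∧ f z1 = f z2 := by
    exact Finset.exists_ne_map_eq_of_card_lt_of_maps_to (t := t1)
      (by rw [houtcard, ht1c]; omega) (fun z _ => hf2 z)
  have hz1t1 : z1 ∉ t1 := (Finset.mem_sdiff.mp hz1).2
  have hz2t1 : z2 ∉ t1 := (Finset.mem_sdiff.mp hz2).2
  have hst1 : f z1 ∈ t1 := hf2 z1
  have hz1s : z1 ≠ f z1 := fun h => hz1t1 (h ▸ hst1)
  have hz2s : z2 ≠ f z1 := fun h => hz2t1 (h ▸ hst1)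
  have hD1 : (Sv z1)ᶜ = {z1, f z1} := paireq z1 z1 (f z1) hz1s (hvD z1) (hf1 z1)
  have hD2 : (Sv z2)ᶜ = {z2, f z1} := by
    have hs2 : f z1 ∈ (Sv z2)ᶜ := by rw [hfz]; exact hf1 z2
    exact paireq z2 z2 (f z1) hz2s (hvD z2) hs2
  obtain ⟨t2, ht2c, ht2E, hz1t2, hz2t2, hst2⟩ := lemL (f z1) z1 z2 hz1s hz2s hD1 hD2
  by_cases hd12 : Disjoint t1 t2
  · exact final t1 t2 ht1c ht1E ht2c ht2E hd12
  obtain ⟨y0, hy0t1, hy0t2⟩ := Finset.not_disjoint_iff.mp hd12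
  obtain ⟨y, hyt2, hyz1, hyz2, ht2mem⟩ := third t2 z1 z2 ht2c hz1t2 hz2t2 hz12
  have hyt1 : y ∈ t1 := by
    rcases ht2mem y0 hy0t2 with h | h | h
    · exact absurd (h ▸ hy0t1) hz1t1
    · exact absurd (h ▸ hy0t1) hz2t1
    · exact h ▸ hy0t1
  have hint : ∀ w, w ∈ t1 → w ∈ t2 → w = y := by
    intro w hw1 hw2
    rcases ht2mem w hw2 with h | h | h
    · exact absurd (h ▸ hw1) hz1t1
    · exact absurd (h ▸ hw1) hz2t1
    · exact h
  -- two fresh vertices outside t1 ∪ {z1, z2}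
  have hOcard : 1 < (Finset.univ \ (t1 ∪ {z1, z2})).card := by
    rw [Finset.card_sdiff_of_subset (Finset.subset_univ _), Finset.card_univ, horder]
    have h1 := Finset.card_union_le t1 ({z1, z2} : Finset α)
    have h2 : ({z1, z2} : Finset α).card ≤ 2 := Finset.card_insert_le z1 {z2}
    omega
  obtain ⟨z3, hz3O, z4, hz4O, hz34⟩ := Finset.one_lt_card.mp hOcard
  have hz3' : z3 ∉ t1 ∧ ¬(z3 = z1 ∨ z3 = z2) := by
    have h := (Finset.mem_sdiff.mp hz3O).2
    simp only [Finset.mem_union, Finset.mem_insert, Finset.mem_singleton] at h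
    tauto
  have hz4' : z4 ∉ t1 ∧ ¬(z4 = z1 ∨ z4 = z2) := by
    have h := (Finset.mem_sdiff.mp hz4O).2
    simp only [Finset.mem_union, Finset.mem_insert, Finset.mem_singleton] at h
    tauto
  have hz3t2 : z3 ∉ t2 := by
    intro h
    rcases ht2mem z3 h with h' | h' | h'
    · exact hz3'.2 (Or.inl h')
    · exact hz3'.2 (Or.inr h')
    · exact hz3'.1 (h' ▸ hyt1)
  have hz4t2 : z4 ∉ t2 := by
    intro h
    rcases ht2mem z4 h with h' | h' | h'
    · exact hz4'.2 (Or.inl h')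
    · exact hz4'.2 (Or.inr h')
    · exact hz4'.1 (h' ▸ hyt1)
  have hfz3 : f z3 = y := by
    obtain ⟨e, he⟩ := hmeets t2 ht2c ht2E z3
    have heD := (Finset.mem_inter.mp he).1
    have het2 := (Finset.mem_inter.mp he).2
    have hD3 : (Sv z3)ᶜ = {z3, f z3} :=
      paireq z3 z3 (f z3) (fun h => hz3'.1 (h ▸ hf2 z3)) (hvD z3) (hf1 z3)
    rw [hD3] at heD
    rcases Finset.mem_insert.mp heD with h | h
    · exact absurd (h ▸ het2) hz3t2
    · exact hint (f z3) (hf2 z3) ((Finset.mem_singleton.mp h) ▸ het2)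
  have hfz4 : f z4 = y := by
    obtain ⟨e, he⟩ := hmeets t2 ht2c ht2E z4
    have heD := (Finset.mem_inter.mp he).1
    have het2 := (Finset.mem_inter.mp he).2
    have hD4 : (Sv z4)ᶜ = {z4, f z4} :=
      paireq z4 z4 (f z4) (fun h => hz4'.1 (h ▸ hf2 z4)) (hvD z4) (hf1 z4)
    rw [hD4] at heD
    rcases Finset.mem_insert.mp heD with h | h
    · exact absurd (h ▸ het2) hz4t2
    · exact hint (f z4) (hf2 z4) ((Finset.mem_singleton.mp h) ▸ het2)
  have hz3y : z3 ≠ y := fun h => hz3'.1 (h ▸ hyt1)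
  have hz4y : z4 ≠ y := fun h => hz4'.1 (h ▸ hyt1)
  have hD3' : (Sv z3)ᶜ = {z3, y} := by
    rw [← hfz3]
    exact paireq z3 z3 (f z3) (by rw [hfz3]; exact hz3y) (hvD z3) (hf1 z3)
  have hD4' : (Sv z4)ᶜ = {z4, y} := by
    rw [← hfz4]
    exact paireq z4 z4 (f z4) (by rw [hfz4]; exact hz4y) (hvD z4) (hf1 z4)
  obtain ⟨t3, ht3c, ht3E, hz3t3, hz4t3, hyt3⟩ := lemL y z3 z4 hz3y hz4y hD3' hD4'
  by_cases hd13 : Disjoint t1 t3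
  · exact final t1 t3 ht1c ht1E ht3c ht3E hd13
  by_cases hd23 : Disjoint t2 t3
  · exact final t2 t3 ht2c ht2E ht3c ht3E hd23
  obtain ⟨w1, hw1t1, hw1t3⟩ := Finset.not_disjoint_iff.mp hd13
  obtain ⟨w2, hw2t2, hw2t3⟩ := Finset.not_disjoint_iff.mp hd23
  obtain ⟨c, hct3, hcz3, hcz4, ht3mem⟩ := third t3 z3 z4 ht3c hz3t3 hz4t3 hz34
  have hc1 : c ∈ t1 := by
    rcases ht3mem w1 hw1t3 with h | h | h
    · exact absurd (h ▸ hw1t1) hz3'.1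
    · exact absurd (h ▸ hw1t1) hz4'.1
    · exact h ▸ hw1t1
  have hc2 : c ∈ t2 := by
    rcases ht3mem w2 hw2t3 with h | h | h
    · exact absurd (h ▸ hw2t2) hz3t2
    · exact absurd (h ▸ hw2t2) hz4t2
    · exact h ▸ hw2t2
  exact hyt3 ((hint c hc1 hc2) ▸ hct3)
end

section
/- Let H be a 3-uniform hypergraph with clique number ω(H) = k, and let N_1, …, N_ℓ (ℓ ≥ 3) be maximum cliques of H such that ⋂_{i=1}^ℓ N_i = ∅ while ⋂_{j ≠ i} N_j ≠ ∅ for every i ∈ {1,…,ℓ}. Then for each i ∈ {1,…,ℓ} there exists a 2-element set p_i ⊆ N_i (a private pair of N_i) such that p_i ⊆ N_j if and only if j = i. -/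
/-- Szemerédi–Petruska: each maximum clique `N i` of a critical family of maximum
cliques with empty total intersection contains a private pair. -/
theorem private_pairs_exist {α : Type*} [Fintype α] [DecidableEq α]
    (E : Finset (Finset α)) (hE : ∀ e ∈ E, e.card = 3)
    (k : ℕ)
    (homega_le : ∀ S : Finset α, IsClique3 E S → S.card ≤ k)
    (homega_ex : ∃ S : Finset α, IsClique3 E S ∧ S.card = k)
    (ℓ : ℕ) (hℓ : 3 ≤ ℓ)
    (N : Fin ℓ → Finset α)
    (hN : ∀ i, IsClique3 E (N i) ∧ (N i).card = k)
    (hIntEmpty : (Finset.univ : Finset (Fin ℓ)).inf N = ∅)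
    (hIntNonempty : ∀ i : Fin ℓ, (((Finset.univ : Finset (Fin ℓ)).erase i).inf N).Nonempty) :
    ∀ i : Fin ℓ, ∃ p : Finset α, p.card = 2 ∧ p ⊆ N i ∧ (∀ j : Fin ℓ, p ⊆ N j ↔ j = i) := by
  intro i
  by_contra hcon
  push_neg at hcon
  obtain ⟨v, hv⟩ := hIntNonempty i
  have hvmem : ∀ j, j ≠ i → v ∈ N j := by
    intro j hj
    exact Finset.le_iff_subset.mp (Finset.inf_le (Finset.mem_erase.mpr ⟨hj, Finset.mem_univ j⟩)) hv
  have hvi : v ∉ N i := by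
    intro hvi
    have hmem : v ∈ (Finset.univ : Finset (Fin ℓ)).inf N := by
      rw [Finset.mem_inf]
      intro j _
      by_cases hji : j = i
      · subst hji; exact hvi
      · exact hvmem j hji
    rw [hIntEmpty] at hmem
    exact absurd hmem (Finset.notMem_empty v)
  have hclique : IsClique3 E (insert v (N i)) := by
    intro t ht htc
    by_cases hvt : v ∈ t
    · have ht' : t.erase v ⊆ N i := by
        intro x hx
        have hx1 := Finset.mem_erase.mp hx
        rcases Finset.mem_insert.mp (ht hx1.2) with h | h
        · exact absurd h hx1.1
        · exact h
      have htc' : (t.erase v).card = 2 := by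
        rw [Finset.card_erase_of_mem hvt, htc]
      obtain ⟨j, hj⟩ := hcon (t.erase v) htc' ht'
      have hji : j ≠ i := by
        rintro rfl
        rcases hj with ⟨_, h⟩ | ⟨h, _⟩
        · exact h rfl
        · exact h ht'
      have hpj : t.erase v ⊆ N j := by
        rcases hj with ⟨h, _⟩ | ⟨_, h⟩
        · exact h
        · exact absurd h hji
      have htj : t ⊆ N j := by
        intro x hx
        by_cases hxv : x = v
        · subst hxv; exact hvmem j hji
        · exact hpj (Finset.mem_erase.mpr ⟨hxv, hx⟩)
      exact (hN j).1 t htj htc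
    · have : t ⊆ N i := fun x hx => by
        rcases Finset.mem_insert.mp (ht hx) with h | h
        · exact absurd (h ▸ hx) hvt
        · exact h
      exact (hN i).1 t this htc
  have hcard : (insert v (N i)).card = k + 1 := by
    rw [Finset.card_insert_of_notMem hvi, (hN i).2]
  have := homega_le _ hclique
  omega
end

section
/- In an intersecting (2,m)-system covering V, |V| = |V_0(G)| + |Z(G)| ≤ |V_0(G)| + w(G). -/
open Finset

/-- The minimum cardinality of a set `S ⊆ A` meeting every member `q i`, `i ∈ s`,
of a set system (a transversal number). -/
noncomputable def transversalNum {α ι : Type*} [DecidableEq α]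
    (A : Finset α) (s : Finset ι) (q : ι → Finset α) : ℕ :=
  sInf {n : ℕ | ∃ S : Finset α, S ⊆ A ∧ S.card = n ∧ ∀ i ∈ s, (S ∩ q i).Nonempty}

/-- order_le_V0_add_weight -/
theorem order_le_V0_add_weight {α : Type*} [Fintype α] [DecidableEq α]
    (m ℓ : ℕ) (hℓ : 3 ≤ ℓ)
    (p M : Fin ℓ → Finset α)
    (hp : ∀ i, (p i).card = 2)
    (hM : ∀ i, (M i).card = m)
    (hpM : ∀ i j, p i ∩ M j = ∅ ↔ i = j)
    (hcover : Finset.univ.biUnion M = (Finset.univ : Finset α))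
    :
    Fintype.card α
      = (Finset.univ.biUnion p).card + ((Finset.univ : Finset α) \ Finset.univ.biUnion p).card ∧
    (Fintype.card α : ℤ)
      ≤ ((Finset.univ.biUnion p).card : ℤ)
        + ∑ j : Fin ℓ, ((m : ℤ)
            - (transversalNum (Finset.univ \ p j) (Finset.univ.erase j) (fun h => p h \ p j) : ℤ)) := by
  classical
  set V0 := Finset.univ.biUnion p with hV0
  have hcard : Fintype.card α = V0.card + (Finset.univ \ V0).card := by
    rw [add_comm, Finset.card_sdiff_add_card_eq_card (Finset.subset_univ _), Finset.card_univ]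
  refine ⟨hcard, ?_⟩
  have hdisj : ∀ j : Fin ℓ, ∀ x, x ∈ M j → x ∉ p j := by
    intro j x hxM hxp
    have : x ∈ p j ∩ M j := Finset.mem_inter.2 ⟨hxp, hxM⟩
    rw [(hpM j j).2 rfl] at this
    exact absurd this (Finset.notMem_empty x)
  have key : ∀ j : Fin ℓ,
      (transversalNum (Finset.univ \ p j) (Finset.univ.erase j) (fun h => p h \ p j) : ℤ)
        ≤ ((M j ∩ V0).card : ℤ) := by
    intro j
    have hmem : (M j ∩ V0).card ∈ {n : ℕ | ∃ S : Finset α, S ⊆ Finset.univ \ p j ∧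
        S.card = n ∧ ∀ i ∈ Finset.univ.erase j, (S ∩ (p i \ p j)).Nonempty} := by
      refine ⟨M j ∩ V0, ?_, rfl, ?_⟩
      · intro x hx
        rw [Finset.mem_inter] at hx
        exact Finset.mem_sdiff.2 ⟨Finset.mem_univ x, hdisj j x hx.1⟩
      · intro i hi
        have hij : i ≠ j := (Finset.mem_erase.1 hi).1
        have hne : (p i ∩ M j).Nonempty := by
          rw [Finset.nonempty_iff_ne_empty]
          intro h; exact hij ((hpM i j).1 h)
        obtain ⟨x, hx⟩ := hne
        rw [Finset.mem_inter] at hx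
        have hxV0 : x ∈ V0 := Finset.mem_biUnion.2 ⟨i, Finset.mem_univ i, hx.1⟩
        exact ⟨x, Finset.mem_inter.2 ⟨Finset.mem_inter.2 ⟨hx.2, hxV0⟩,
          Finset.mem_sdiff.2 ⟨hx.1, hdisj j x hx.2⟩⟩⟩
    exact_mod_cast Nat.sInf_le hmem
  have hZ : ((Finset.univ \ V0).card : ℤ) ≤ ∑ j : Fin ℓ, ((M j \ V0).card : ℤ) := by
    have hsub2 : (Finset.univ : Finset α) \ V0 ⊆ Finset.univ.biUnion (fun j => M j \ V0) := by
      intro x hx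
      rw [Finset.mem_sdiff] at hx
      have hxM : x ∈ Finset.univ.biUnion M := by rw [hcover]; exact Finset.mem_univ x
      obtain ⟨j, _, hj⟩ := Finset.mem_biUnion.1 hxM
      exact Finset.mem_biUnion.2 ⟨j, Finset.mem_univ j, Finset.mem_sdiff.2 ⟨hj, hx.2⟩⟩
    calc ((Finset.univ \ V0).card : ℤ)
        ≤ ((Finset.univ.biUnion (fun j => M j \ V0)).card : ℤ) := by
          exact_mod_cast Finset.card_le_card hsub2
      _ ≤ ∑ j : Fin ℓ, ((M j \ V0).card : ℤ) := by
          exact_mod_cast Finset.card_biUnion_le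
  have hterm : ∀ j : Fin ℓ, ((M j \ V0).card : ℤ) ≤ (m : ℤ)
      - (transversalNum (Finset.univ \ p j) (Finset.univ.erase j) (fun h => p h \ p j) : ℤ) := by
    intro j
    have h1 : (M j ∩ V0).card + (M j \ V0).card = m := by
      rw [Finset.card_inter_add_card_sdiff, hM]
    have h1' : ((M j ∩ V0).card : ℤ) + ((M j \ V0).card : ℤ) = (m : ℤ) := by exact_mod_cast h1
    linarith [key j]
  have hsum : ((Finset.univ \ V0).card : ℤ) ≤ ∑ j : Fin ℓ, ((m : ℤ)
      - (transversalNum (Finset.univ \ p j) (Finset.univ.erase j) (fun h => p h \ p j) : ℤ)) :=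
    hZ.trans (Finset.sum_le_sum fun j _ => hterm j)
  rw [hcard]
  push_cast
  linarith
end

section
/- In an intersecting (2,m)-system covering V (with ℓ ≥ 3), if w(p_ℓ) = 0, then |V_0(G)| + w(G) ≤ |V_0(G′)| + w(G′), where G′ = G − p_ℓ is the graph with edge set {p_1,…,p_{ℓ−1}}. -/
open Finset

lemma transversalNum_le {α ι : Type*} [DecidableEq α]
    (A : Finset α) (s : Finset ι) (q : ι → Finset α) (S : Finset α)
    (hS : S ⊆ A) (h : ∀ i ∈ s, (S ∩ q i).Nonempty) :
    transversalNum A s q ≤ S.card :=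
  Nat.sInf_le ⟨S, hS, rfl, h⟩

lemma transversalNum_mem {α ι : Type*} [DecidableEq α]
    (A : Finset α) (s : Finset ι) (q : ι → Finset α)
    (hne : ∃ S : Finset α, S ⊆ A ∧ ∀ i ∈ s, (S ∩ q i).Nonempty) :
    ∃ S : Finset α, S ⊆ A ∧ S.card = transversalNum A s q ∧
      ∀ i ∈ s, (S ∩ q i).Nonempty := by
  have hne' : {n : ℕ | ∃ S : Finset α, S ⊆ A ∧ S.card = n ∧
      ∀ i ∈ s, (S ∩ q i).Nonempty}.Nonempty := by
    obtain ⟨S, hS, h⟩ := hne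
    exact ⟨S.card, S, hS, rfl, h⟩
  exact Nat.sInf_mem hne'

/-- zero_weight_edge_removal -/
theorem zero_weight_edge_removal {α : Type*} [Fintype α] [DecidableEq α]
    (m ℓ : ℕ) (hℓ : 3 ≤ ℓ)
    (p M : Fin ℓ → Finset α)
    (hp : ∀ i, (p i).card = 2)
    (hM : ∀ i, (M i).card = m)
    (hpM : ∀ i j, p i ∩ M j = ∅ ↔ i = j)
    (hcover : Finset.univ.biUnion M = (Finset.univ : Finset α))
    (jl : Fin ℓ) (hjl : (jl : ℕ) = ℓ - 1)
    (hw : (m : ℤ)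
        - (transversalNum (Finset.univ \ p jl) (Finset.univ.erase jl) (fun h => p h \ p jl) : ℤ)
      = 0) :
    ((Finset.univ.biUnion p).card : ℤ)
        + ∑ j : Fin ℓ, ((m : ℤ)
            - (transversalNum (Finset.univ \ p j) (Finset.univ.erase j) (fun h => p h \ p j) : ℤ))
      ≤ (((Finset.univ.erase jl).biUnion p).card : ℤ)
          + ∑ i ∈ Finset.univ.erase jl, ((m : ℤ)
              - (transversalNum (Finset.univ \ p i) ((Finset.univ.erase jl).erase i)
                  (fun h => p h \ p i) : ℤ)) := by
  classical
  set τ : Fin ℓ → ℕ := fun i =>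
    transversalNum (Finset.univ \ p i) (Finset.univ.erase i) (fun h => p h \ p i) with hτ
  set τ' : Fin ℓ → ℕ := fun i =>
    transversalNum (Finset.univ \ p i) ((Finset.univ.erase jl).erase i) (fun h => p h \ p i)
    with hτ'
  set B : Finset α := (Finset.univ.erase jl).biUnion p with hB
  -- witness: M i is a feasible transversal for any subset of constraints
  have hMfeas : ∀ (i : Fin ℓ) (s : Finset (Fin ℓ)), i ∉ s →
      M i ⊆ Finset.univ \ p i ∧ ∀ h ∈ s, ((M i) ∩ (p h \ p i)).Nonempty := by
    intro i s his
    have hdisj : p i ∩ M i = ∅ := (hpM i i).mpr rfl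
    constructor
    · intro x hx
      simp only [mem_sdiff, mem_univ, true_and]
      intro hxp
      have : x ∈ p i ∩ M i := mem_inter.mpr ⟨hxp, hx⟩
      simp [hdisj] at this
    · intro h hhs
      have hhi : h ≠ i := fun e => his (e ▸ hhs)
      have : p h ∩ M i ≠ ∅ := fun e => hhi ((hpM h i).mp e)
      obtain ⟨x, hx⟩ := nonempty_iff_ne_empty.mpr this
      rw [mem_inter] at hx
      refine ⟨x, mem_inter.mpr ⟨hx.2, mem_sdiff.mpr ⟨hx.1, ?_⟩⟩⟩
      intro hxp
      have : x ∈ p i ∩ M i := mem_inter.mpr ⟨hxp, hx.2⟩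
      simp [hdisj] at this
  -- optimal transversal for τ i exists
  have hopt : ∀ i : Fin ℓ, ∃ S : Finset α, S ⊆ Finset.univ \ p i ∧ S.card = τ i ∧
      ∀ h ∈ Finset.univ.erase i, (S ∩ (p h \ p i)).Nonempty := by
    intro i
    apply transversalNum_mem
    obtain ⟨h1, h2⟩ := hMfeas i (Finset.univ.erase i) (Finset.notMem_erase i _)
    exact ⟨M i, h1, h2⟩
  -- monotonicity: τ' i ≤ τ i
  have hmono : ∀ i : Fin ℓ, τ' i ≤ τ i := by
    intro i
    obtain ⟨S, hS1, hS2, hS3⟩ := hopt i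
    rw [hτ', ← hS2]
    apply transversalNum_le _ _ _ _ hS1
    intro h hh
    rw [Finset.mem_erase] at hh
    exact hS3 h (Finset.mem_erase.mpr ⟨hh.1, Finset.mem_univ h⟩)
  -- core lemma: if every optimal transversal for τ i contains a vertex of p jl
  -- belonging to no other edge, then τ' i + 1 ≤ τ i
  have hcore : ∀ i : Fin ℓ, i ≠ jl →
      (∀ S : Finset α, S ⊆ Finset.univ \ p i →
        (∀ h ∈ Finset.univ.erase i, (S ∩ (p h \ p i)).Nonempty) →
        ∃ w ∈ S, ∀ h : Fin ℓ, h ≠ jl → w ∉ p h) →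
      τ' i + 1 ≤ τ i := by
    intro i hi hyp
    obtain ⟨S, hS1, hS2, hS3⟩ := hopt i
    obtain ⟨w, hwS, hwnot⟩ := hyp S hS1 hS3
    have hτ'le : τ' i ≤ (S.erase w).card := by
      apply transversalNum_le
      · exact (Finset.erase_subset _ _).trans hS1
      · intro h hh
        rw [Finset.mem_erase, Finset.mem_erase] at hh
        obtain ⟨hhi, hhjl, -⟩ := hh
        obtain ⟨x, hx⟩ := hS3 h (Finset.mem_erase.mpr ⟨hhi, Finset.mem_univ h⟩)
        rw [Finset.mem_inter, Finset.mem_sdiff] at hx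
        refine ⟨x, Finset.mem_inter.mpr ⟨Finset.mem_erase.mpr ⟨?_, hx.1⟩,
          Finset.mem_sdiff.mpr hx.2⟩⟩
        intro hxw
        exact hwnot h hhjl (hxw ▸ hx.2.1)
    have hcard : (S.erase w).card = S.card - 1 := Finset.card_erase_of_mem hwS
    have hpos : 1 ≤ S.card := Finset.card_pos.mpr ⟨w, hwS⟩
    omega
  -- cardinality: |V0(G)| = |B| + k
  set k : ℕ := ((p jl) \ B).card with hk
  have hV0 : (Finset.univ.biUnion p).card = B.card + k := by
    have huniv : (Finset.univ : Finset (Fin ℓ)) = insert jl (Finset.univ.erase jl) :=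
      (Finset.insert_erase (Finset.mem_univ jl)).symm
    rw [huniv, Finset.biUnion_insert, ← hB, ← Finset.card_sdiff_add_card]
    omega
  -- k ≤ 2
  have hk2 : k ≤ 2 := by
    have := Finset.card_le_card (Finset.sdiff_subset (s := p jl) (t := B))
    rw [hp jl] at this
    omega
  -- membership in B
  have hmemB : ∀ x : α, x ∈ B ↔ ∃ h : Fin ℓ, h ≠ jl ∧ x ∈ p h := by
    intro x
    rw [hB, Finset.mem_biUnion]
    constructor
    · rintro ⟨h, hh, hx⟩
      exact ⟨h, (Finset.mem_erase.mp hh).1, hx⟩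
    · rintro ⟨h, hh, hx⟩
      exact ⟨h, Finset.mem_erase.mpr ⟨hh, Finset.mem_univ h⟩, hx⟩
  -- the key sum inequality
  have hkey : (k : ℤ) ≤ ∑ i ∈ Finset.univ.erase jl, ((τ i : ℤ) - (τ' i : ℤ)) := by
    have hnonneg : ∀ i ∈ Finset.univ.erase jl, (0 : ℤ) ≤ (τ i : ℤ) - (τ' i : ℤ) := by
      intro i _
      have := hmono i
      omega
    interval_cases k
    · exact Finset.sum_nonneg hnonneg
    · -- k = 1 : there is v ∈ p jl \ B, and some u ∈ p jl ∩ B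
      have hone : ((p jl) \ B).card = 1 := hk.symm
      obtain ⟨v, hv⟩ := Finset.card_pos.mp (by omega : 0 < ((p jl) \ B).card)
      rw [Finset.mem_sdiff] at hv
      obtain ⟨hvjl, hvB⟩ := hv
      have huB : ((p jl) ∩ B).Nonempty := by
        by_contra hcon
        rw [Finset.not_nonempty_iff_eq_empty] at hcon
        have : p jl \ B = p jl := by
          apply Finset.sdiff_eq_self_of_disjoint
          exact Finset.disjoint_iff_inter_eq_empty.mpr hcon
        rw [this, hp jl] at hone
        omega
      obtain ⟨u, hu⟩ := huB
      rw [Finset.mem_inter] at hu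
      obtain ⟨hujl, huB'⟩ := hu
      obtain ⟨i0, hi0jl, hui0⟩ := (hmemB u).mp huB'
      have huv : u ≠ v := fun e => hvB (e ▸ huB')
      -- p jl = {u, v}
      have hpjl : p jl = {u, v} := by
        apply (Finset.eq_of_subset_of_card_le _ _).symm
        · intro x hx
          rw [Finset.mem_insert, Finset.mem_singleton] at hx
          rcases hx with rfl | rfl
          · exact hujl
          · exact hvjl
        · rw [hp jl, Finset.card_insert_of_notMem (by simpa using huv),
            Finset.card_singleton]
      have hg : τ' i0 + 1 ≤ τ i0 := by
        apply hcore i0 hi0jl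
        intro S hS1 hS3
        obtain ⟨x, hx⟩ := hS3 jl (Finset.mem_erase.mpr ⟨(Ne.symm hi0jl), Finset.mem_univ jl⟩)
        rw [Finset.mem_inter, Finset.mem_sdiff] at hx
        obtain ⟨hxS, hxjl, hxi0⟩ := hx
        have hxv : x = v := by
          rw [hpjl, Finset.mem_insert, Finset.mem_singleton] at hxjl
          rcases hxjl with rfl | rfl
          · exact absurd hui0 hxi0
          · rfl
        refine ⟨x, hxS, ?_⟩
        intro h hh hxp
        exact hvB ((hmemB v).mpr ⟨h, hh, hxv ▸ hxp⟩)
      have hi0mem : i0 ∈ Finset.univ.erase jl :=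
        Finset.mem_erase.mpr ⟨hi0jl, Finset.mem_univ i0⟩
      have := Finset.sum_le_sum_of_subset_of_nonneg
        (Finset.singleton_subset_iff.mpr hi0mem)
        (fun i hi _ => hnonneg i hi)
      rw [Finset.sum_singleton] at this
      have : (1 : ℤ) ≤ (τ i0 : ℤ) - (τ' i0 : ℤ) := by
        have := hg; omega
      calc ((1 : ℕ) : ℤ) ≤ (τ i0 : ℤ) - (τ' i0 : ℤ) := by exact_mod_cast this
        _ ≤ _ := Finset.single_le_sum hnonneg hi0mem
    · -- k = 2 : p jl is disjoint from B, every term is ≥ 1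
      have htwo : ((p jl) \ B).card = 2 := hk.symm
      have hsd : p jl \ B = p jl := by
        apply Finset.eq_of_subset_of_card_le (Finset.sdiff_subset)
        rw [htwo, hp jl]
      have hdisjB : ∀ x ∈ p jl, x ∉ B := by
        intro x hx
        have : x ∈ p jl \ B := hsd.symm ▸ hx
        exact (Finset.mem_sdiff.mp this).2
      have hall : ∀ i ∈ Finset.univ.erase jl, (1 : ℤ) ≤ (τ i : ℤ) - (τ' i : ℤ) := by
        intro i hi
        have hijl := (Finset.mem_erase.mp hi).1
        have := hcore i hijl (by
          intro S hS1 hS3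
          obtain ⟨x, hx⟩ := hS3 jl (Finset.mem_erase.mpr ⟨(Ne.symm hijl), Finset.mem_univ jl⟩)
          rw [Finset.mem_inter, Finset.mem_sdiff] at hx
          obtain ⟨hxS, hxjl, -⟩ := hx
          refine ⟨x, hxS, ?_⟩
          intro h hh hxp
          exact hdisjB x hxjl ((hmemB x).mpr ⟨h, hh, hxp⟩))
        omega
      have hcarderase : (Finset.univ.erase jl).card = ℓ - 1 := by
        rw [Finset.card_erase_of_mem (Finset.mem_univ jl), Finset.card_univ,
          Fintype.card_fin]
      calc ((2 : ℕ) : ℤ) ≤ ((ℓ - 1 : ℕ) : ℤ) := by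
            have : 2 ≤ ℓ - 1 := by omega
            exact_mod_cast this
        _ = ∑ _i ∈ Finset.univ.erase jl, (1 : ℤ) := by
            rw [Finset.sum_const, hcarderase]; simp
        _ ≤ _ := Finset.sum_le_sum hall
  -- assemble
  have hsum : ∑ j : Fin ℓ, ((m : ℤ) - (τ j : ℤ))
      = ∑ j ∈ Finset.univ.erase jl, ((m : ℤ) - (τ j : ℤ)) + ((m : ℤ) - (τ jl : ℤ)) :=
    (Finset.sum_erase_add _ _ (Finset.mem_univ jl)).symm
  have hwjl : (m : ℤ) - (τ jl : ℤ) = 0 := hw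
  rw [hsum, hwjl, add_zero, hV0]
  push_cast
  have hsplit : ∑ i ∈ Finset.univ.erase jl, ((m : ℤ) - (τ' i : ℤ))
      - ∑ j ∈ Finset.univ.erase jl, ((m : ℤ) - (τ j : ℤ))
      = ∑ i ∈ Finset.univ.erase jl, ((τ i : ℤ) - (τ' i : ℤ)) := by
    rw [← Finset.sum_sub_distrib]
    apply Finset.sum_congr rfl
    intro i _
    ring
  linarith [hkey, hsplit]
end

section
/- In an intersecting (2,m)-system covering V with m ≥ 2, if τ(G) = 2 then |V| ≤ (m+2 choose 2). -/
open Finset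

lemma ar_final (m n : ℕ) (h : 2*n ≤ (m+1)*(m+2)) : n ≤ (m+2).choose 2 := by
  rw [Nat.choose_two_right]
  rw [Nat.le_div_iff_mul_le (by norm_num)]
  simpa [Nat.mul_comm] using h

lemma ar_E (m s t q n v0 fA fB : ℕ) (hm : 2 ≤ m) (hs : 1 ≤ s) (ht : 1 ≤ t)
    (hsq : s + q ≤ m + 1) (htm : t ≤ m) (hv0 : v0 ≤ 1 + s + q)
    (hA : fA + (s*(s-1) + q) ≤ s*m) (hB : fB + t*t ≤ t*m)
    (hn : n ≤ v0 + fA + fB) : 2*n ≤ (m+1)*(m+2) := by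
  obtain ⟨s', rfl⟩ : ∃ s', s = s'+1 := ⟨s-1, by omega⟩
  simp only [Nat.add_sub_cancel] at hA
  zify at *
  nlinarith [sq_nonneg (2*(s':ℤ)+2-m-2), sq_nonneg (2*(t:ℤ)-m)]

lemma ar_N1 (m s t n v0 fA fB : ℕ) (hm : 2 ≤ m) (hs : 1 ≤ s) (ht : 1 ≤ t)
    (hsm : s ≤ m) (htm : t ≤ m) (hv0 : v0 ≤ 2 + s + t)
    (hA : fA + s*s ≤ s*m) (hB : fB + t*t ≤ t*m)
    (hn : n ≤ v0 + fA + fB) : 2*n ≤ (m+1)*(m+2) := by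
  rcases Nat.lt_or_ge m 3 with h3 | h3
  · have : m = 2 := by omega
    subst this
    interval_cases s <;> interval_cases t <;> omega
  · zify at *
    nlinarith [sq_nonneg (2*(s:ℤ)-m-1), sq_nonneg (2*(t:ℤ)-m-1)]

lemma ar_N2 (m s t n v0 fA fB : ℕ) (hm : 2 ≤ m) (hs : 1 ≤ s) (ht : 1 ≤ t)
    (hsm : s ≤ m+1) (htm : t ≤ m) (hts : t ≤ s) (hv0 : v0 ≤ 2 + s)
    (hA : fA + (s*(s-1) + t) ≤ s*m) (hB : fB + t*t ≤ t*m)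
    (hn : n ≤ v0 + fA + fB) : 2*n ≤ (m+1)*(m+2) := by
  obtain ⟨s', rfl⟩ : ∃ s', s = s'+1 := ⟨s-1, by omega⟩
  simp only [Nat.add_sub_cancel] at hA
  rcases Nat.lt_or_ge m 3 with h3 | h3
  · have : m = 2 := by omega
    subst this
    have hs' : s' ≤ 2 := by omega
    interval_cases s' <;> interval_cases t <;> omega
  · zify at *
    nlinarith [sq_nonneg (2*(s':ℤ)+2-m-2), sq_nonneg (2*(t:ℤ)-m+1)]

/-- tau_two_case -/
theorem tau_two_case {α : Type*} [Fintype α] [DecidableEq α]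
    (m ℓ : ℕ) (hℓ : 3 ≤ ℓ)
    (p M : Fin ℓ → Finset α)
    (hp : ∀ i, (p i).card = 2)
    (hM : ∀ i, (M i).card = m)
    (hpM : ∀ i j, p i ∩ M j = ∅ ↔ i = j)
    (hcover : Finset.univ.biUnion M = (Finset.univ : Finset α))
    (hm : 2 ≤ m)
    (htau : transversalNum (Finset.univ : Finset α) Finset.univ p = 2) :
    Fintype.card α ≤ (m + 2).choose 2 := by
  classical
  unfold transversalNum at htau
  have hne : {n : ℕ | ∃ S : Finset α, S ⊆ univ ∧ S.card = n ∧
      ∀ i ∈ (univ : Finset (Fin ℓ)), (S ∩ p i).Nonempty}.Nonempty := by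
    refine ⟨(univ : Finset α).card, univ, Finset.Subset.rfl, rfl, fun i _ => ?_⟩
    obtain ⟨v, hv⟩ : (p i).Nonempty := by
      rw [← Finset.card_pos, hp i]; norm_num
    exact ⟨v, Finset.mem_inter.2 ⟨Finset.mem_univ v, hv⟩⟩
  have hmem := Nat.sInf_mem hne
  rw [htau] at hmem
  obtain ⟨S, -, hS2, hShit⟩ := hmem
  obtain ⟨x, y, hxy, rfl⟩ := Finset.card_eq_two.mp hS2
  have hcov2 : ∀ i, x ∈ p i ∨ y ∈ p i := by
    intro i
    obtain ⟨v, hv⟩ := hShit i (Finset.mem_univ i)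
    rw [Finset.mem_inter, Finset.mem_insert, Finset.mem_singleton] at hv
    rcases hv.1 with h | h
    · exact Or.inl (h ▸ hv.2)
    · exact Or.inr (h ▸ hv.2)
  have hno1 : ∀ v : α, ∃ i, v ∉ p i := by
    intro v
    by_contra hcon
    push_neg at hcon
    have h1 : (1 : ℕ) ∈ {n : ℕ | ∃ S : Finset α, S ⊆ univ ∧ S.card = n ∧
        ∀ i ∈ (univ : Finset (Fin ℓ)), (S ∩ p i).Nonempty} :=
      ⟨{v}, Finset.subset_univ _, Finset.card_singleton v,
        fun i _ => ⟨v, Finset.mem_inter.2 ⟨Finset.mem_singleton_self v, hcon i⟩⟩⟩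
    have := Nat.sInf_le h1
    omega
  -- basic disjointness facts
  have hdisj : ∀ j, ∀ v ∈ p j, v ∉ M j := by
    intro j v hv hvM
    have h0 : p j ∩ M j = ∅ := (hpM j j).mpr rfl
    have : v ∈ p j ∩ M j := Finset.mem_inter.2 ⟨hv, hvM⟩
    rw [h0] at this
    exact absurd this (Finset.notMem_empty v)
  have hmeet : ∀ i j, i ≠ j → (p i ∩ M j).Nonempty := by
    intro i j h
    rw [Finset.nonempty_iff_ne_empty]
    exact fun he => h ((hpM i j).mp he)
  have hpinj : ∀ i j, p i = p j → i = j := by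
    intro i j h
    apply (hpM i j).mp
    rw [h]
    exact (hpM j j).mpr rfl
  -- choice functions a b
  have hae : ∀ (z : α) (i : Fin ℓ), ∃ v, v ∈ p i ∧ v ≠ z := by
    intro z i
    by_contra hcon
    push_neg at hcon
    have hsub : p i ⊆ {z} := fun v hv => Finset.mem_singleton.2 (hcon v hv)
    have := Finset.card_le_card hsub
    rw [hp i, Finset.card_singleton] at this
    omega
  choose a haP haX using hae x
  choose b hbP hbY using hae y
  have hpa : ∀ i, x ∈ p i → p i = {x, a i} := by
    intro i hx
    refine (Finset.eq_of_subset_of_card_le ?_ ?_).symm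
    · intro v hv
      rw [Finset.mem_insert, Finset.mem_singleton] at hv
      rcases hv with rfl | rfl
      exacts [hx, haP i]
    · rw [hp i, Finset.card_insert_of_notMem (by simp [Ne.symm (haX i)]),
        Finset.card_singleton]
  have hpb : ∀ i, y ∈ p i → p i = {y, b i} := by
    intro i hy
    refine (Finset.eq_of_subset_of_card_le ?_ ?_).symm
    · intro v hv
      rw [Finset.mem_insert, Finset.mem_singleton] at hv
      rcases hv with rfl | rfl
      exacts [hy, hbP i]
    · rw [hp i, Finset.card_insert_of_notMem (by simp [Ne.symm (hbY i)]),
        Finset.card_singleton]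
  have hmemA : ∀ i, x ∈ p i → ∀ v ∈ p i, v = x ∨ v = a i := by
    intro i hx v hv
    rw [hpa i hx, Finset.mem_insert, Finset.mem_singleton] at hv
    exact hv
  have hmemB : ∀ i, y ∈ p i → ∀ v ∈ p i, v = y ∨ v = b i := by
    intro i hy v hv
    rw [hpb i hy, Finset.mem_insert, Finset.mem_singleton] at hv
    exact hv
  -- A and B
  set A : Finset (Fin ℓ) := univ.filter (fun i => x ∈ p i) with hAdef
  set B : Finset (Fin ℓ) := univ.filter (fun i => x ∉ p i) with hBdef
  have hmemA' : ∀ i, i ∈ A ↔ x ∈ p i := by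
    intro i; simp [hAdef]
  have hmemB' : ∀ i, i ∈ B ↔ x ∉ p i := by
    intro i; simp [hBdef]
  have hyB : ∀ k ∈ B, y ∈ p k := by
    intro k hk
    exact (hcov2 k).resolve_left ((hmemB' k).mp hk)
  have hABne : ∀ i j, i ∈ A → j ∈ B → i ≠ j := by
    intro i j hi hj h
    exact ((hmemB' j).mp hj) (h ▸ (hmemA' i).mp hi)
  have hAne : A.Nonempty := by
    obtain ⟨i, hi⟩ := hno1 y
    exact ⟨i, (hmemA' i).mpr ((hcov2 i).resolve_right hi)⟩
  have hBne : B.Nonempty := by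
    obtain ⟨i, hi⟩ := hno1 x
    exact ⟨i, (hmemB' i).mpr hi⟩
  set s := A.card with hsdef
  set t := B.card with htdef
  have hs1 : 1 ≤ s := Finset.card_pos.2 hAne
  have ht1 : 1 ≤ t := Finset.card_pos.2 hBne
  -- injectivity
  have hainj : Set.InjOn a ↑A := by
    intro i hi j hj h
    apply hpinj
    rw [hpa i ((hmemA' i).mp (by exact_mod_cast hi)),
      hpa j ((hmemA' j).mp (by exact_mod_cast hj)), h]
  have hbinj : Set.InjOn b ↑B := by
    intro i hi j hj h
    apply hpinj
    rw [hpb i (hyB i (by exact_mod_cast hi)), hpb j (hyB j (by exact_mod_cast hj)), h]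
  set αa : Finset α := A.image a with hαadef
  set βb : Finset α := B.image b with hβbdef
  have hcardα : αa.card = s := Finset.card_image_of_injOn hainj
  have hcardβ : βb.card = t := Finset.card_image_of_injOn hbinj
  have hxβ : x ∉ βb := by
    rw [hβbdef]
    simp only [Finset.mem_image, not_exists]
    rintro k ⟨hk, hbk⟩
    exact ((hmemB' k).mp hk) (hbk ▸ hbP k)
  -- membership in M
  have haM : ∀ i ∈ A, ∀ j ∈ A, i ≠ j → a i ∈ M j := by
    intro i hi j hj hij
    obtain ⟨v, hv⟩ := hmeet i j hij
    rw [Finset.mem_inter] at hv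
    rcases hmemA i ((hmemA' i).mp hi) v hv.1 with rfl | rfl
    · exact absurd hv.2 (hdisj j v ((hmemA' j).mp hj))
    · exact hv.2
  have hbM : ∀ i ∈ B, ∀ j ∈ B, i ≠ j → b i ∈ M j := by
    intro i hi j hj hij
    obtain ⟨v, hv⟩ := hmeet i j hij
    rw [Finset.mem_inter] at hv
    rcases hmemB i (hyB i hi) v hv.1 with rfl | rfl
    · exact absurd hv.2 (hdisj j v (hyB j hj))
    · exact hv.2
  have hbMA : ∀ j ∈ A, y ∉ M j → ∀ k ∈ B, b k ∈ M j := by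
    intro j hj hy k hk
    obtain ⟨v, hv⟩ := hmeet k j (hABne j k hj hk).symm
    rw [Finset.mem_inter] at hv
    rcases hmemB k (hyB k hk) v hv.1 with rfl | rfl
    · exact absurd hv.2 hy
    · exact hv.2
  have haMB : ∀ k ∈ B, x ∉ M k → ∀ i ∈ A, a i ∈ M k := by
    intro k hk hx i hi
    obtain ⟨v, hv⟩ := hmeet i k (hABne i k hi hk)
    rw [Finset.mem_inter] at hv
    rcases hmemA i ((hmemA' i).mp hi) v hv.1 with rfl | rfl
    · exact absurd hv.2 hx
    · exact hv.2
  -- counting skeleton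
  have hfree : ∀ (V0 : Finset α) (j : Fin ℓ), (M j \ V0).card + (M j ∩ V0).card = m := by
    intro V0 j
    rw [Finset.card_sdiff_add_card_inter, hM j]
  have hinterm : ∀ (V0 : Finset α) (j : Fin ℓ), (M j ∩ V0).card ≤ m := by
    intro V0 j
    calc (M j ∩ V0).card ≤ (M j).card := Finset.card_le_card (Finset.inter_subset_left)
    _ = m := hM j
  have hcount : ∀ V0 : Finset α, Fintype.card α ≤
      V0.card + (∑ j ∈ A, (M j \ V0).card + ∑ j ∈ B, (M j \ V0).card) := by
    intro V0
    have h1 : (univ : Finset α) ⊆ V0 ∪ ((univ : Finset α) \ V0) := by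
      intro v _
      by_cases hv : v ∈ V0
      · exact Finset.mem_union_left _ hv
      · exact Finset.mem_union_right _ (Finset.mem_sdiff.2 ⟨Finset.mem_univ v, hv⟩)
    have h2 : ((univ : Finset α) \ V0) ⊆ univ.biUnion (fun j => M j \ V0) := by
      intro v hv
      rw [Finset.mem_sdiff] at hv
      have : v ∈ univ.biUnion M := by rw [hcover]; exact Finset.mem_univ v
      obtain ⟨j, -, hj⟩ := Finset.mem_biUnion.mp this
      exact Finset.mem_biUnion.2 ⟨j, Finset.mem_univ j, Finset.mem_sdiff.2 ⟨hj, hv.2⟩⟩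
    calc Fintype.card α = (univ : Finset α).card := rfl
    _ ≤ (V0 ∪ ((univ : Finset α) \ V0)).card := Finset.card_le_card h1
    _ ≤ V0.card + ((univ : Finset α) \ V0).card := Finset.card_union_le _ _
    _ ≤ V0.card + (univ.biUnion (fun j => M j \ V0)).card := by
        exact Nat.add_le_add_left (Finset.card_le_card h2) _
    _ ≤ V0.card + ∑ j ∈ univ, (M j \ V0).card := by
        exact Nat.add_le_add_left (Finset.card_biUnion_le) _
    _ = V0.card + (∑ j ∈ A, (M j \ V0).card + ∑ j ∈ B, (M j \ V0).card) := by
        rw [Finset.sum_filter_add_sum_filter_not]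
  have hsumS : ∀ (V0 : Finset α) (S : Finset (Fin ℓ)) (c : Fin ℓ → ℕ),
      (∀ j ∈ S, c j ≤ (M j ∩ V0).card) →
      (∑ j ∈ S, (M j \ V0).card) + ∑ j ∈ S, c j ≤ S.card * m := by
    intro V0 S c hc
    rw [← Finset.sum_add_distrib]
    calc ∑ j ∈ S, ((M j \ V0).card + c j) ≤ ∑ _j ∈ S, m := by
          refine Finset.sum_le_sum (fun j hj => ?_)
          have h1 := hfree V0 j
          have h2 := hc j hj
          omega
    _ = S.card * m := by rw [Finset.sum_const, smul_eq_mul]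
  -- erased images
  have hXsubM : ∀ j ∈ A, ((A.erase j).image a) ⊆ M j := by
    intro j hj v hv
    obtain ⟨i, hi, rfl⟩ := Finset.mem_image.mp hv
    rw [Finset.mem_erase] at hi
    exact haM i hi.2 j hj hi.1
  have hXsubα : ∀ j : Fin ℓ, ((A.erase j).image a) ⊆ αa :=
    fun j => Finset.image_subset_image (Finset.erase_subset j A)
  have hXcard : ∀ j ∈ A, ((A.erase j).image a).card = s - 1 := by
    intro j hj
    rw [Finset.card_image_of_injOn (hainj.mono (by exact_mod_cast Finset.erase_subset j A)),
      Finset.card_erase_of_mem hj]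
  have hYsubM : ∀ k ∈ B, ((B.erase k).image b) ⊆ M k := by
    intro k hk v hv
    obtain ⟨i, hi, rfl⟩ := Finset.mem_image.mp hv
    rw [Finset.mem_erase] at hi
    exact hbM i hi.2 k hk hi.1
  have hYsubβ : ∀ k : Fin ℓ, ((B.erase k).image b) ⊆ βb :=
    fun k => Finset.image_subset_image (Finset.erase_subset k B)
  have hYcard : ∀ k ∈ B, ((B.erase k).image b).card = t - 1 := by
    intro k hk
    rw [Finset.card_image_of_injOn (hbinj.mono (by exact_mod_cast Finset.erase_subset k B)),
      Finset.card_erase_of_mem hk]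
  have key : 2 * Fintype.card α ≤ (m+1)*(m+2) := by
    by_cases hE : ∃ j0, x ∈ p j0 ∧ y ∈ p j0
    · -- case E : the edge {x,y} is present
      obtain ⟨j0, hj0x, hj0y⟩ := hE
      have hj0A : j0 ∈ A := (hmemA' j0).mpr hj0x
      have haj0 : a j0 = y := by
        rcases hmemA j0 hj0x y hj0y with h | h
        · exact absurd h.symm hxy
        · exact h.symm
      set V0 : Finset α := insert x (αa ∪ βb) with hV0def
      set q : ℕ := (βb \ αa).card with hqdef
      have hαV0 : αa ⊆ V0 := fun v hv =>
        Finset.mem_insert_of_mem (Finset.mem_union_left _ hv)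
      have hβV0 : βb ⊆ V0 := fun v hv =>
        Finset.mem_insert_of_mem (Finset.mem_union_right _ hv)
      have hxV0 : x ∈ V0 := Finset.mem_insert_self x _
      have hv0 : V0.card ≤ 1 + s + q := by
        calc V0.card ≤ (αa ∪ βb).card + 1 := Finset.card_insert_le _ _
        _ = (αa ∪ (βb \ αa)).card + 1 := by rw [Finset.union_sdiff_self_eq_union]
        _ = (αa.card + q) + 1 := by
            rw [Finset.card_union_of_disjoint Finset.disjoint_sdiff]
        _ = 1 + s + q := by rw [hcardα]; ring
      set cA : Fin ℓ → ℕ := fun j => (s-1) + (if j = j0 then q else 0) with hcAdef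
      have hcA : ∀ j ∈ A, cA j ≤ (M j ∩ V0).card := by
        intro j hj
        have hXsub : ((A.erase j).image a) ⊆ M j ∩ V0 :=
          Finset.subset_inter (hXsubM j hj) (fun v hv => hαV0 (hXsubα j hv))
        by_cases hjj : j = j0
        · subst hjj
          have hyM : y ∉ M j := hdisj j y hj0y
          have hβM : βb ⊆ M j := by
            intro v hv
            obtain ⟨k, hk, rfl⟩ := Finset.mem_image.mp hv
            exact hbMA j hj hyM k hk
          have hsub : ((A.erase j).image a) ∪ (βb \ αa) ⊆ M j ∩ V0 :=
            Finset.union_subset hXsub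
              (Finset.subset_inter (fun v hv => hβM (Finset.mem_sdiff.mp hv).1)
                (fun v hv => hβV0 (Finset.mem_sdiff.mp hv).1))
          have hdisj2 : Disjoint ((A.erase j).image a) (βb \ αa) :=
            Finset.disjoint_sdiff.mono_left (hXsubα j)
          have hcard := Finset.card_le_card hsub
          rw [Finset.card_union_of_disjoint hdisj2, hXcard j hj] at hcard
          simp only [hcAdef, if_pos rfl, if_true]
          omega
        · have hcard := Finset.card_le_card hXsub
          rw [hXcard j hj] at hcard
          simp only [hcAdef, if_neg hjj]
          omega
      have hsumcA : ∑ j ∈ A, cA j = s*(s-1) + q := by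
        rw [hcAdef, Finset.sum_add_distrib, Finset.sum_const, smul_eq_mul, ← hsdef,
          Finset.sum_ite_eq' A j0 (fun _ => q), if_pos hj0A]
      have hcB : ∀ k ∈ B, t ≤ (M k ∩ V0).card := by
        intro k hk
        have hxM : x ∈ M k := by
          obtain ⟨v, hv⟩ := hmeet j0 k (hABne j0 k hj0A hk)
          rw [Finset.mem_inter] at hv
          rcases hmemA j0 hj0x v hv.1 with rfl | rfl
          · exact hv.2
          · rw [haj0] at hv
            exact absurd hv.2 (hdisj k y (hyB k hk))
        have hsub : insert x ((B.erase k).image b) ⊆ M k ∩ V0 :=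
          Finset.insert_subset (Finset.mem_inter.2 ⟨hxM, hxV0⟩)
            (Finset.subset_inter (hYsubM k hk) (fun v hv => hβV0 (hYsubβ k hv)))
        have hcard := Finset.card_le_card hsub
        rw [Finset.card_insert_of_notMem (fun hc => hxβ (hYsubβ k hc)),
          hYcard k hk] at hcard
        omega
      have hsq : s + q ≤ m + 1 := by
        have h1' := hcA j0 hj0A
        simp only [hcAdef, if_pos rfl, if_true] at h1'
        have := hinterm V0 j0
        omega
      have htm : t ≤ m := by
        obtain ⟨k, hk⟩ := hBne
        exact le_trans (hcB k hk) (hinterm V0 k)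
      have hA' := hsumS V0 A cA hcA
      rw [hsumcA] at hA'
      have hB' := hsumS V0 B (fun _ => t) hcB
      rw [Finset.sum_const, smul_eq_mul, ← htdef] at hB'
      exact ar_E m s t q _ (V0.card) _ _ hm hs1 ht1 hsq htm hv0 hA' hB'
        (by have := hcount V0; omega)
    · push_neg at hE
      have hyα : y ∉ αa := by
        rw [hαadef]
        simp only [Finset.mem_image, not_exists]
        rintro i ⟨hi, hai⟩
        exact hE i ((hmemA' i).mp hi) (hai ▸ haP i)
      by_cases h1 : βb ⊆ αa
      · -- case N2
        set V0 : Finset α := insert x (insert y (αa ∪ βb)) with hV0def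
        have hαV0 : αa ⊆ V0 := fun v hv =>
          Finset.mem_insert_of_mem (Finset.mem_insert_of_mem (Finset.mem_union_left _ hv))
        have hβV0 : βb ⊆ V0 := fun v hv =>
          Finset.mem_insert_of_mem (Finset.mem_insert_of_mem (Finset.mem_union_right _ hv))
        have hxV0 : x ∈ V0 := Finset.mem_insert_self x _
        have hyV0 : y ∈ V0 := Finset.mem_insert_of_mem (Finset.mem_insert_self y _)
        have hv0 : V0.card ≤ 2 + s := by
          have hsub : V0 ⊆ insert x (insert y αa) := by
            rw [hV0def]
            refine Finset.insert_subset_insert _ (Finset.insert_subset_insert _ ?_)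
            rw [Finset.union_subset_iff]
            exact ⟨Finset.Subset.rfl, h1⟩
          calc V0.card ≤ (insert x (insert y αa)).card := Finset.card_le_card hsub
          _ ≤ (insert y αa).card + 1 := Finset.card_insert_le _ _
          _ ≤ (αa.card + 1) + 1 := Nat.add_le_add_right (Finset.card_insert_le _ _) 1
          _ = 2 + s := by rw [hcardα]; ring
        set cA : Fin ℓ → ℕ := fun j => (s-1) + (if a j ∈ βb then 1 else 0) with hcAdef
        have hcA : ∀ j ∈ A, cA j ≤ (M j ∩ V0).card := by
          intro j hj
          have hXsub : ((A.erase j).image a) ⊆ M j ∩ V0 :=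
            Finset.subset_inter (hXsubM j hj) (fun v hv => hαV0 (hXsubα j hv))
          by_cases haj : a j ∈ βb
          · have hyM : y ∈ M j := by
              obtain ⟨k, hk, hbk⟩ := Finset.mem_image.mp haj
              obtain ⟨v, hv⟩ := hmeet k j (hABne j k hj hk).symm
              rw [Finset.mem_inter] at hv
              rcases hmemB k (hyB k hk) v hv.1 with rfl | rfl
              · exact hv.2
              · rw [hbk] at hv
                exact absurd hv.2 (hdisj j (a j) (haP j))
            have hsub : insert y ((A.erase j).image a) ⊆ M j ∩ V0 :=
              Finset.insert_subset (Finset.mem_inter.2 ⟨hyM, hyV0⟩) hXsub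
            have hcard := Finset.card_le_card hsub
            rw [Finset.card_insert_of_notMem (fun hc => hyα (hXsubα j hc)),
              hXcard j hj] at hcard
            simp only [hcAdef, if_pos haj]
            omega
          · have hcard := Finset.card_le_card hXsub
            rw [hXcard j hj] at hcard
            simp only [hcAdef, if_neg haj]
            omega
        have hfilt : (A.filter (fun j => a j ∈ βb)).card = t := by
          have himg : (A.filter (fun j => a j ∈ βb)).image a = βb := by
            apply Finset.Subset.antisymm
            · intro v hv
              obtain ⟨j, hj, rfl⟩ := Finset.mem_image.mp hv
              exact (Finset.mem_filter.mp hj).2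
            · intro v hv
              obtain ⟨j, hj, rfl⟩ := Finset.mem_image.mp (h1 hv)
              exact Finset.mem_image.2 ⟨j, Finset.mem_filter.2 ⟨hj, hv⟩, rfl⟩
          have hinj' := Finset.card_image_of_injOn (hainj.mono
            (Finset.coe_subset.mpr (Finset.filter_subset (fun j => a j ∈ βb) A)))
          rw [himg] at hinj'
          rw [← hinj', hcardβ]
        have hsumcA : ∑ j ∈ A, cA j = s*(s-1) + t := by
          rw [hcAdef, Finset.sum_add_distrib, Finset.sum_const, smul_eq_mul, ← hsdef,
            ← hfilt, Finset.card_filter]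
        have hcB : ∀ k ∈ B, t ≤ (M k ∩ V0).card := by
          intro k hk
          have hx : x ∈ M k := by
            by_contra hx
            have : b k ∈ M k := by
              obtain ⟨i, hi, hbk⟩ := Finset.mem_image.mp (h1 (Finset.mem_image.2 ⟨k, hk, rfl⟩))
              rw [← hbk]
              exact haMB k hk hx i hi
            exact hdisj k (b k) (hbP k) this
          have hsub : insert x ((B.erase k).image b) ⊆ M k ∩ V0 :=
            Finset.insert_subset (Finset.mem_inter.2 ⟨hx, hxV0⟩)
              (Finset.subset_inter (hYsubM k hk) (fun v hv => hβV0 (hYsubβ k hv)))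
          have hcard := Finset.card_le_card hsub
          rw [Finset.card_insert_of_notMem (fun hc => hxβ (hYsubβ k hc)),
            hYcard k hk] at hcard
          omega
        have hsm : s ≤ m + 1 := by
          obtain ⟨j, hj⟩ := hAne
          have h1' : s - 1 ≤ (M j ∩ V0).card := by
            have hcard := Finset.card_le_card (Finset.subset_inter (hXsubM j hj)
              (fun v hv => hαV0 (hXsubα j hv)))
            rw [hXcard j hj] at hcard
            exact hcard
          have := hinterm V0 j
          omega
        have htm : t ≤ m := by
          obtain ⟨k, hk⟩ := hBne
          exact le_trans (hcB k hk) (hinterm V0 k)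
        have hts : t ≤ s := by
          rw [← hfilt, hsdef]
          exact Finset.card_le_card (Finset.filter_subset (fun j => a j ∈ βb) A)
        have hA' := hsumS V0 A cA hcA
        rw [hsumcA] at hA'
        have hB' := hsumS V0 B (fun _ => t) hcB
        rw [Finset.sum_const, smul_eq_mul, ← htdef] at hB'
        exact ar_N2 m s t _ (V0.card) _ _ hm hs1 ht1 hsm htm hts hv0 hA' hB'
          (by have := hcount V0; omega)
      by_cases h2 : αa ⊆ βb
      · -- case N3
        set V0 : Finset α := insert x (insert y (αa ∪ βb)) with hV0def
        have hαV0 : αa ⊆ V0 := fun v hv =>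
          Finset.mem_insert_of_mem (Finset.mem_insert_of_mem (Finset.mem_union_left _ hv))
        have hβV0 : βb ⊆ V0 := fun v hv =>
          Finset.mem_insert_of_mem (Finset.mem_insert_of_mem (Finset.mem_union_right _ hv))
        have hxV0 : x ∈ V0 := Finset.mem_insert_self x _
        have hyV0 : y ∈ V0 := Finset.mem_insert_of_mem (Finset.mem_insert_self y _)
        have hv0 : V0.card ≤ 2 + t := by
          have hsub : V0 ⊆ insert x (insert y βb) := by
            rw [hV0def]
            refine Finset.insert_subset_insert _ (Finset.insert_subset_insert _ ?_)
            rw [Finset.union_subset_iff]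
            exact ⟨h2, Finset.Subset.rfl⟩
          calc V0.card ≤ (insert x (insert y βb)).card := Finset.card_le_card hsub
          _ ≤ (insert y βb).card + 1 := Finset.card_insert_le _ _
          _ ≤ (βb.card + 1) + 1 := Nat.add_le_add_right (Finset.card_insert_le _ _) 1
          _ = 2 + t := by rw [hcardβ]; ring
        have hcA : ∀ j ∈ A, s ≤ (M j ∩ V0).card := by
          intro j hj
          have hyM : y ∈ M j := by
            by_contra hy
            have : a j ∈ M j := by
              obtain ⟨k, hk, hbk⟩ := Finset.mem_image.mp (h2 (Finset.mem_image.2 ⟨j, hj, rfl⟩))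
              rw [← hbk]
              exact hbMA j hj hy k hk
            exact hdisj j (a j) (haP j) this
          have hsub : insert y ((A.erase j).image a) ⊆ M j ∩ V0 :=
            Finset.insert_subset (Finset.mem_inter.2 ⟨hyM, hyV0⟩)
              (Finset.subset_inter (hXsubM j hj) (fun v hv => hαV0 (hXsubα j hv)))
          have hcard := Finset.card_le_card hsub
          rw [Finset.card_insert_of_notMem (fun hc => hyα (hXsubα j hc)),
            hXcard j hj] at hcard
          omega
        set cB : Fin ℓ → ℕ := fun k => (t-1) + (if b k ∈ αa then 1 else 0) with hcBdef
        have hxα : x ∉ αa := fun hc => hxβ (h2 hc)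
        have hcB : ∀ k ∈ B, cB k ≤ (M k ∩ V0).card := by
          intro k hk
          have hYsub : ((B.erase k).image b) ⊆ M k ∩ V0 :=
            Finset.subset_inter (hYsubM k hk) (fun v hv => hβV0 (hYsubβ k hv))
          by_cases hbk : b k ∈ αa
          · have hxM : x ∈ M k := by
              obtain ⟨i, hi, hai⟩ := Finset.mem_image.mp hbk
              obtain ⟨v, hv⟩ := hmeet i k (hABne i k hi hk)
              rw [Finset.mem_inter] at hv
              rcases hmemA i ((hmemA' i).mp hi) v hv.1 with rfl | rfl
              · exact hv.2
              · rw [hai] at hv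
                exact absurd hv.2 (hdisj k (b k) (hbP k))
            have hsub : insert x ((B.erase k).image b) ⊆ M k ∩ V0 :=
              Finset.insert_subset (Finset.mem_inter.2 ⟨hxM, hxV0⟩) hYsub
            have hcard := Finset.card_le_card hsub
            rw [Finset.card_insert_of_notMem (fun hc => hxβ (hYsubβ k hc)),
              hYcard k hk] at hcard
            simp only [hcBdef, if_pos hbk]
            omega
          · have hcard := Finset.card_le_card hYsub
            rw [hYcard k hk] at hcard
            simp only [hcBdef, if_neg hbk]
            omega
        have hfilt : (B.filter (fun k => b k ∈ αa)).card = s := by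
          have himg : (B.filter (fun k => b k ∈ αa)).image b = αa := by
            apply Finset.Subset.antisymm
            · intro v hv
              obtain ⟨k, hk, rfl⟩ := Finset.mem_image.mp hv
              exact (Finset.mem_filter.mp hk).2
            · intro v hv
              obtain ⟨k, hk, rfl⟩ := Finset.mem_image.mp (h2 hv)
              exact Finset.mem_image.2 ⟨k, Finset.mem_filter.2 ⟨hk, hv⟩, rfl⟩
          have hinj' := Finset.card_image_of_injOn (hbinj.mono
            (Finset.coe_subset.mpr (Finset.filter_subset (fun k => b k ∈ αa) B)))
          rw [himg] at hinj'
          rw [← hinj', hcardα]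
        have hsumcB : ∑ k ∈ B, cB k = t*(t-1) + s := by
          rw [hcBdef, Finset.sum_add_distrib, Finset.sum_const, smul_eq_mul, ← htdef,
            ← hfilt, Finset.card_filter]
        have htm : t ≤ m + 1 := by
          obtain ⟨k, hk⟩ := hBne
          have h1' : t - 1 ≤ (M k ∩ V0).card := by
            have hcard := Finset.card_le_card (Finset.subset_inter (hYsubM k hk)
              (fun v hv => hβV0 (hYsubβ k hv)))
            rw [hYcard k hk] at hcard
            exact hcard
          have := hinterm V0 k
          omega
        have hsm : s ≤ m := by
          obtain ⟨j, hj⟩ := hAne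
          exact le_trans (hcA j hj) (hinterm V0 j)
        have hst : s ≤ t := by
          rw [← hfilt, htdef]
          exact Finset.card_le_card (Finset.filter_subset (fun k => b k ∈ αa) B)
        have hA' := hsumS V0 A (fun _ => s) hcA
        rw [Finset.sum_const, smul_eq_mul, ← hsdef] at hA'
        have hB' := hsumS V0 B cB hcB
        rw [hsumcB] at hB'
        exact ar_N2 m t s _ (V0.card) _ _ hm ht1 hs1 htm hsm hst hv0 hB' hA'
          (by have := hcount V0; omega)
      · -- case N1
        set V0 : Finset α := insert x (insert y (αa ∪ βb)) with hV0def
        have hαV0 : αa ⊆ V0 := fun v hv =>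
          Finset.mem_insert_of_mem (Finset.mem_insert_of_mem (Finset.mem_union_left _ hv))
        have hβV0 : βb ⊆ V0 := fun v hv =>
          Finset.mem_insert_of_mem (Finset.mem_insert_of_mem (Finset.mem_union_right _ hv))
        have hxV0 : x ∈ V0 := Finset.mem_insert_self x _
        have hyV0 : y ∈ V0 := Finset.mem_insert_of_mem (Finset.mem_insert_self y _)
        have hv0 : V0.card ≤ 2 + s + t := by
          calc V0.card ≤ (insert y (αa ∪ βb)).card + 1 := Finset.card_insert_le _ _
          _ ≤ ((αa ∪ βb).card + 1) + 1 := by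
              exact Nat.add_le_add_right (Finset.card_insert_le _ _) 1
          _ ≤ ((αa.card + βb.card) + 1) + 1 := by
              exact Nat.add_le_add_right (Nat.add_le_add_right (Finset.card_union_le _ _) 1) 1
          _ = 2 + s + t := by rw [hcardα, hcardβ]; ring
        have hcA : ∀ j ∈ A, s ≤ (M j ∩ V0).card := by
          intro j hj
          by_cases hy : y ∈ M j
          · have hsub : insert y ((A.erase j).image a) ⊆ M j ∩ V0 := by
              refine Finset.insert_subset (Finset.mem_inter.2 ⟨hy, hyV0⟩) ?_
              exact Finset.subset_inter (hXsubM j hj)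
                (fun v hv => hαV0 (hXsubα j hv))
            have hcard := Finset.card_le_card hsub
            rw [Finset.card_insert_of_notMem (fun hc => hyα (hXsubα j hc)),
              hXcard j hj] at hcard
            omega
          · have hβM : βb ⊆ M j := by
              intro v hv
              obtain ⟨k, hk, rfl⟩ := Finset.mem_image.mp hv
              exact hbMA j hj hy k hk
            have hsub : ((A.erase j).image a) ∪ (βb \ αa) ⊆ M j ∩ V0 := by
              refine Finset.union_subset
                (Finset.subset_inter (hXsubM j hj) (fun v hv => hαV0 (hXsubα j hv)))
                (Finset.subset_inter (fun v hv => hβM (Finset.mem_sdiff.mp hv).1)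
                  (fun v hv => hβV0 (Finset.mem_sdiff.mp hv).1))
            have hdisj2 : Disjoint ((A.erase j).image a) (βb \ αa) :=
              Finset.disjoint_sdiff.mono_left (hXsubα j)
            have hq : 1 ≤ (βb \ αa).card :=
              Finset.card_pos.2 (Finset.sdiff_nonempty.mpr h1)
            have hcard := Finset.card_le_card hsub
            rw [Finset.card_union_of_disjoint hdisj2, hXcard j hj] at hcard
            omega
        have hcB : ∀ k ∈ B, t ≤ (M k ∩ V0).card := by
          intro k hk
          by_cases hx : x ∈ M k
          · have hsub : insert x ((B.erase k).image b) ⊆ M k ∩ V0 := by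
              refine Finset.insert_subset (Finset.mem_inter.2 ⟨hx, hxV0⟩) ?_
              exact Finset.subset_inter (hYsubM k hk)
                (fun v hv => hβV0 (hYsubβ k hv))
            have hcard := Finset.card_le_card hsub
            rw [Finset.card_insert_of_notMem (fun hc => hxβ (hYsubβ k hc)),
              hYcard k hk] at hcard
            omega
          · have hαM : αa ⊆ M k := by
              intro v hv
              obtain ⟨i, hi, rfl⟩ := Finset.mem_image.mp hv
              exact haMB k hk hx i hi
            have hsub : ((B.erase k).image b) ∪ (αa \ βb) ⊆ M k ∩ V0 := by
              refine Finset.union_subset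
                (Finset.subset_inter (hYsubM k hk) (fun v hv => hβV0 (hYsubβ k hv)))
                (Finset.subset_inter (fun v hv => hαM (Finset.mem_sdiff.mp hv).1)
                  (fun v hv => hαV0 (Finset.mem_sdiff.mp hv).1))
            have hdisj2 : Disjoint ((B.erase k).image b) (αa \ βb) :=
              Finset.disjoint_sdiff.mono_left (hYsubβ k)
            have hq : 1 ≤ (αa \ βb).card :=
              Finset.card_pos.2 (Finset.sdiff_nonempty.mpr h2)
            have hcard := Finset.card_le_card hsub
            rw [Finset.card_union_of_disjoint hdisj2, hYcard k hk] at hcard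
            omega
        have hsm : s ≤ m := by
          obtain ⟨j, hj⟩ := hAne
          exact le_trans (hcA j hj) (hinterm V0 j)
        have htm : t ≤ m := by
          obtain ⟨k, hk⟩ := hBne
          exact le_trans (hcB k hk) (hinterm V0 k)
        have hA' := hsumS V0 A (fun _ => s) hcA
        have hB' := hsumS V0 B (fun _ => t) hcB
        rw [Finset.sum_const, smul_eq_mul, ← hsdef] at hA'
        rw [Finset.sum_const, smul_eq_mul, ← htdef] at hB'
        exact ar_N1 m s t _ (V0.card) _ _ hm hs1 ht1 hsm htm hv0 hA' hB' (by have := hcount V0; omega)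
  have := ar_final m (Fintype.card α) key
  exact this
end

section
/- In an intersecting (2,m)-system covering V, if τ(G) = m + 1, then |V| ≤ 2(m + 1); in particular, if m ≥ 2 then |V| ≤ (m+2 choose 2). -/
open Finset

open scoped Classical in
/-- Neighborhood of `W` through the edges `p`. -/
noncomputable def NBset {α : Type*} {ℓ : ℕ} [Fintype α] [DecidableEq α]
    (p : Fin ℓ → Finset α) (W : Finset α) : Finset α :=
  Finset.univ.filter (fun t => ∃ h, ∃ w ∈ W, w ≠ t ∧ p h = ({w, t} : Finset α))

lemma mem_NBset {α : Type*} {ℓ : ℕ} [Fintype α] [DecidableEq α]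
    {p : Fin ℓ → Finset α} {W : Finset α} {t : α} :
    t ∈ NBset p W ↔ ∃ h, ∃ w ∈ W, w ≠ t ∧ p h = ({w, t} : Finset α) := by
  simp [NBset]

lemma nb_mono {α : Type*} {ℓ : ℕ} [Fintype α] [DecidableEq α]
    (p : Fin ℓ → Finset α) {W W' : Finset α} (h : W ⊆ W') :
    NBset p W ⊆ NBset p W' := by
  intro t ht
  rw [mem_NBset] at ht ⊢
  obtain ⟨j, w, hw, hne, hpj⟩ := ht
  exact ⟨j, w, h hw, hne, hpj⟩

lemma pair_other {α : Type*} [DecidableEq α] {s : Finset α} {w : α}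
    (hs : s.card = 2) (hw : w ∈ s) : ∃ t, t ≠ w ∧ s = {w, t} := by
  obtain ⟨a, b, hab, rfl⟩ := Finset.card_eq_two.mp hs
  rcases Finset.mem_insert.mp hw with rfl | hw'
  · exact ⟨b, Ne.symm hab, rfl⟩
  · rw [Finset.mem_singleton] at hw'
    subst hw'
    exact ⟨a, hab, by rw [Finset.pair_comm]⟩

lemma hall_step {α : Type*} {m ℓ : ℕ} [Fintype α] [DecidableEq α]
    (p M : Fin ℓ → Finset α)
    (hp : ∀ i, (p i).card = 2)
    (hM : ∀ i, (M i).card = m)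
    (hpM : ∀ i j, p i ∩ M j = ∅ ↔ i = j)
    (hlow : ∀ S : Finset α, (∀ i, (S ∩ p i).Nonempty) → m + 1 ≤ S.card)
    (hedge : ∀ v : α, ∃ j, v ∈ p j)
    (T : Finset α) (hT : ∀ i, (T ∩ p i).Nonempty) :
    ∀ (n : ℕ) (W : Finset α), Disjoint W T → W.card ≤ n → W.card ≤ (NBset p W).card := by
  intro n
  induction n with
  | zero => intro W _ h; omega
  | succ n ih =>
    intro W hWT hWn
    classical
    have hex : ∀ w ∈ W, ∃ t, t ≠ w ∧ t ∈ T ∧ ∃ j, p j = ({w, t} : Finset α) := by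
      intro w hw
      obtain ⟨j, hj⟩ := hedge w
      obtain ⟨t, htw, hpj⟩ := pair_other (hp j) hj
      refine ⟨t, htw, ?_, j, hpj⟩
      obtain ⟨u, hu⟩ := hT j
      rw [Finset.mem_inter, hpj] at hu
      rcases Finset.mem_insert.mp hu.2 with rfl | hu2
      · exact absurd hu.1 (Finset.disjoint_left.mp hWT hw)
      · rw [Finset.mem_singleton] at hu2
        exact hu2 ▸ hu.1
    choose! f h1 h2 h3 using hex
    by_cases hinj : ∀ w ∈ W, ∀ w' ∈ W, f w = f w' → w = w'
    · have himg : W.image f ⊆ NBset p W := by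
        intro t ht
        obtain ⟨w, hw, rfl⟩ := Finset.mem_image.mp ht
        rw [mem_NBset]
        obtain ⟨j, hj⟩ := h3 w hw
        exact ⟨j, w, hw, Ne.symm (h1 w hw), hj⟩
      calc W.card = (W.image f).card :=
            (Finset.card_image_of_injOn (fun a ha b hb hab =>
              hinj a (by simpa using ha) b (by simpa using hb) hab)).symm
        _ ≤ (NBset p W).card := Finset.card_le_card himg
    · push_neg at hinj
      obtain ⟨w, hw, w', hw', hfe, hne⟩ := hinj
      obtain ⟨j, hpj⟩ := h3 w hw
      obtain ⟨h, hph⟩ := h3 w' hw'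
      rw [← hfe] at hph
      -- hpj : p j = {w, f w}, hph : p h = {w', f w}
      have hjh : h ≠ j := by
        intro e
        rw [e] at hph
        have hw'mem : w' ∈ ({w, f w} : Finset α) := by
          rw [← hpj, hph]; exact Finset.mem_insert_self _ _
        rcases Finset.mem_insert.mp hw'mem with e2 | e2
        · exact hne e2.symm
        · rw [Finset.mem_singleton] at e2
          exact (Finset.disjoint_left.mp hWT hw') (e2 ▸ h2 w hw)
      have hfwpj : f w ∈ p j := by
        rw [hpj]; exact Finset.mem_insert_of_mem (Finset.mem_singleton_self _)
      have hwpj : w ∈ p j := by rw [hpj]; exact Finset.mem_insert_self _ _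
      have hfwMj : f w ∉ M j := by
        intro hmem
        have : f w ∈ p j ∩ M j := Finset.mem_inter.mpr ⟨hfwpj, hmem⟩
        rw [(hpM j j).mpr rfl] at this
        exact absurd this (Finset.notMem_empty _)
      have hwMj : w ∉ M j := by
        intro hmem
        have : w ∈ p j ∩ M j := Finset.mem_inter.mpr ⟨hwpj, hmem⟩
        rw [(hpM j j).mpr rfl] at this
        exact absurd this (Finset.notMem_empty _)
      have hw'Mj : w' ∈ M j := by
        have hMne : (p h ∩ M j).Nonempty :=
          Finset.nonempty_iff_ne_empty.mpr (fun e => hjh ((hpM h j).mp e))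
        obtain ⟨u, hu⟩ := hMne
        rw [Finset.mem_inter, hph] at hu
        rcases Finset.mem_insert.mp hu.1 with rfl | h2'
        · exact hu.2
        · rw [Finset.mem_singleton] at h2'
          exact absurd (h2' ▸ hu.2) hfwMj
      set A := W ∩ M j with hAdef
      set B := W \ M j with hBdef
      have hcard : B.card + A.card = W.card := Finset.card_sdiff_add_card_inter W (M j)
      have hAne : w' ∈ A := Finset.mem_inter.mpr ⟨hw', hw'Mj⟩
      have hBw : w ∈ B := Finset.mem_sdiff.mpr ⟨hw, hwMj⟩
      have hBn : B.card ≤ n := by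
        have : 1 ≤ A.card := Finset.card_pos.mpr ⟨w', hAne⟩
        omega
      have hB : B.card ≤ (NBset p B).card :=
        ih B (hWT.mono_left Finset.sdiff_subset) hBn
      set X := ((NBset p A) \ M j) \ ({f w} : Finset α) with hXdef
      set S := ((M j \ W) ∪ X) ∪ ({f w} : Finset α) with hSdef
      have hS : ∀ i, (S ∩ p i).Nonempty := by
        intro i
        by_cases hij : i = j
        · subst hij
          exact ⟨f w, Finset.mem_inter.mpr
            ⟨Finset.mem_union_right _ (Finset.mem_singleton_self _), hfwpj⟩⟩
        · have hne2 : (p i ∩ M j).Nonempty :=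
            Finset.nonempty_iff_ne_empty.mpr (fun e => hij ((hpM i j).mp e))
          obtain ⟨u, hu⟩ := hne2
          rw [Finset.mem_inter] at hu
          by_cases huW : u ∈ W
          · obtain ⟨u', hu'ne, hpi⟩ := pair_other (hp i) hu.1
            have huA : u ∈ A := Finset.mem_inter.mpr ⟨huW, hu.2⟩
            have hu'NB : u' ∈ NBset p A :=
              mem_NBset.mpr ⟨i, u, huA, Ne.symm hu'ne, hpi⟩
            have hu'pi : u' ∈ p i := by
              rw [hpi]; exact Finset.mem_insert_of_mem (Finset.mem_singleton_self _)
            have hu'T : u' ∈ T := by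
              obtain ⟨z, hz⟩ := hT i
              rw [Finset.mem_inter, hpi] at hz
              rcases Finset.mem_insert.mp hz.2 with rfl | hz2
              · exact absurd hz.1 (Finset.disjoint_left.mp hWT huW)
              · rw [Finset.mem_singleton] at hz2
                exact hz2 ▸ hz.1
            have hu'W : u' ∉ W := Finset.disjoint_right.mp hWT hu'T
            by_cases hu'M : u' ∈ M j
            · exact ⟨u', Finset.mem_inter.mpr
                ⟨Finset.mem_union_left _ (Finset.mem_union_left _
                  (Finset.mem_sdiff.mpr ⟨hu'M, hu'W⟩)), hu'pi⟩⟩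
            · by_cases hu't : u' = f w
              · exact ⟨u', Finset.mem_inter.mpr
                  ⟨Finset.mem_union_right _ (by rw [hu't]; exact Finset.mem_singleton_self _),
                    hu'pi⟩⟩
              · refine ⟨u', Finset.mem_inter.mpr
                  ⟨Finset.mem_union_left _ (Finset.mem_union_right _ ?_), hu'pi⟩⟩
                rw [hXdef]
                exact Finset.mem_sdiff.mpr ⟨Finset.mem_sdiff.mpr ⟨hu'NB, hu'M⟩,
                  by simpa using hu't⟩
          · exact ⟨u, Finset.mem_inter.mpr
              ⟨Finset.mem_union_left _ (Finset.mem_union_left _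
                (Finset.mem_sdiff.mpr ⟨hu.2, huW⟩)), hu.1⟩⟩
      have hScard : m + 1 ≤ S.card := hlow S hS
      have hS2 : S.card ≤ (M j \ W).card + X.card + 1 := by
        calc S.card ≤ ((M j \ W) ∪ X).card + ({f w} : Finset α).card :=
              Finset.card_union_le _ _
          _ ≤ (M j \ W).card + X.card + 1 := by
              have := Finset.card_union_le (M j \ W) X
              simp only [Finset.card_singleton]
              omega
      have hMjcard : (M j \ W).card + (M j ∩ W).card = m := by
        rw [Finset.card_sdiff_add_card_inter]; exact hM j
      have hAMj : A.card = (M j ∩ W).card := by rw [hAdef, Finset.inter_comm]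
      have hAX : A.card ≤ X.card := by omega
      have hNBB : NBset p B ⊆ M j ∪ ({f w} : Finset α) := by
        intro t' ht'
        rw [mem_NBset] at ht'
        obtain ⟨h', w'', hw''B, hne'', hph'⟩ := ht'
        by_cases hh' : h' = j
        · rw [hh'] at hph'
          have heq : ({w, f w} : Finset α) = {w'', t'} := hpj.symm.trans hph'
          have hw''mem : w'' ∈ ({w, f w} : Finset α) := by
            rw [heq]; exact Finset.mem_insert_self _ _
          rcases Finset.mem_insert.mp hw''mem with e2 | e2
          · -- w'' = w
            have ht'mem : t' ∈ ({w, f w} : Finset α) := by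
              rw [heq]; exact Finset.mem_insert_of_mem (Finset.mem_singleton_self _)
            rcases Finset.mem_insert.mp ht'mem with e3 | e3
            · exact absurd (e2.trans e3.symm) hne''
            · rw [Finset.mem_singleton] at e3
              exact Finset.mem_union_right _ (by rw [e3]; exact Finset.mem_singleton_self _)
          · rw [Finset.mem_singleton] at e2
            have : w'' ∈ T := e2 ▸ h2 w hw
            have hw''W : w'' ∈ W := (Finset.mem_sdiff.mp hw''B).1
            exact absurd this (Finset.disjoint_left.mp hWT hw''W)
        · have hne3 : (p h' ∩ M j).Nonempty :=
            Finset.nonempty_iff_ne_empty.mpr (fun e => hh' ((hpM h' j).mp e))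
          obtain ⟨u, hu2⟩ := hne3
          rw [Finset.mem_inter, hph'] at hu2
          rcases Finset.mem_insert.mp hu2.1 with rfl | h2'
          · exact absurd hu2.2 (Finset.mem_sdiff.mp hw''B).2
          · rw [Finset.mem_singleton] at h2'
            exact Finset.mem_union_left _ (h2' ▸ hu2.2)
      have hdisjXB : Disjoint X (NBset p B) := by
        rw [Finset.disjoint_left]
        intro a haX haB
        have hmem := hNBB haB
        rw [hXdef] at haX
        rcases Finset.mem_union.mp hmem with hmm | hmm
        · exact (Finset.mem_sdiff.mp (Finset.mem_sdiff.mp haX).1).2 hmm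
        · exact (Finset.mem_sdiff.mp haX).2 hmm
      have hXW : X ⊆ NBset p W := by
        intro a ha
        rw [hXdef] at ha
        exact nb_mono p Finset.inter_subset_left
          (Finset.sdiff_subset (Finset.sdiff_subset ha))
      have hBW : NBset p B ⊆ NBset p W := nb_mono p Finset.sdiff_subset
      calc W.card = B.card + A.card := hcard.symm
        _ ≤ (NBset p B).card + X.card := by omega
        _ = (X ∪ NBset p B).card := by
            rw [Finset.card_union_of_disjoint hdisjXB, add_comm]
        _ ≤ (NBset p W).card := Finset.card_le_card (Finset.union_subset hXW hBW)

lemma edge_exists {α : Type*} {m ℓ : ℕ} [Fintype α] [DecidableEq α]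
    (p M : Fin ℓ → Finset α)
    (hp : ∀ i, (p i).card = 2)
    (hM : ∀ i, (M i).card = m)
    (hpM : ∀ i j, p i ∩ M j = ∅ ↔ i = j)
    (hcover : Finset.univ.biUnion M = (Finset.univ : Finset α))
    (hlow : ∀ S : Finset α, (∀ i, (S ∩ p i).Nonempty) → m + 1 ≤ S.card) :
    ∀ v : α, ∃ j, v ∈ p j := by
  intro v
  by_contra hc
  push_neg at hc
  have hv : v ∈ Finset.univ.biUnion M := by rw [hcover]; exact Finset.mem_univ v
  obtain ⟨k, _, hk⟩ := Finset.mem_biUnion.mp hv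
  have hpk : (p k).Nonempty := by rw [← Finset.card_pos, hp k]; omega
  obtain ⟨x, hx⟩ := hpk
  have hS : ∀ i, ((insert x ((M k).erase v)) ∩ p i).Nonempty := by
    intro i
    by_cases hik : i = k
    · exact ⟨x, Finset.mem_inter.mpr ⟨Finset.mem_insert_self _ _, hik ▸ hx⟩⟩
    · have hne : (p i ∩ M k).Nonempty :=
        Finset.nonempty_iff_ne_empty.mpr (fun e => hik ((hpM i k).mp e))
      obtain ⟨u, hu⟩ := hne
      rw [Finset.mem_inter] at hu
      have huv : u ≠ v := fun e => hc i (e ▸ hu.1)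
      exact ⟨u, Finset.mem_inter.mpr
        ⟨Finset.mem_insert_of_mem (Finset.mem_erase.mpr ⟨huv, hu.2⟩), hu.1⟩⟩
  have h1 := hlow _ hS
  have e1 : ((M k).erase v).card = m - 1 := by rw [Finset.card_erase_of_mem hk, hM k]
  have e2 := Finset.card_insert_le x ((M k).erase v)
  have hm1 : 1 ≤ m := by rw [← hM k]; exact Finset.card_pos.mpr ⟨v, hk⟩
  omega

/-- tau_max_order_bound -/
theorem tau_max_order_bound {α : Type*} [Fintype α] [DecidableEq α]
    (m ℓ : ℕ) (hℓ : 3 ≤ ℓ)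
    (p M : Fin ℓ → Finset α)
    (hp : ∀ i, (p i).card = 2)
    (hM : ∀ i, (M i).card = m)
    (hpM : ∀ i j, p i ∩ M j = ∅ ↔ i = j)
    (hcover : Finset.univ.biUnion M = (Finset.univ : Finset α))
    (htau : transversalNum (Finset.univ : Finset α) Finset.univ p = m + 1) :
    Fintype.card α ≤ 2 * (m + 1) ∧ (2 ≤ m → Fintype.card α ≤ (m + 2).choose 2) := by
  have hlow : ∀ S : Finset α, (∀ i, (S ∩ p i).Nonempty) → m + 1 ≤ S.card := by
    intro S hS
    have hmem : S.card ∈ {n : ℕ | ∃ S' : Finset α, S' ⊆ Finset.univ ∧ S'.card = n ∧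
        ∀ i ∈ (Finset.univ : Finset (Fin ℓ)), (S' ∩ p i).Nonempty} :=
      ⟨S, Finset.subset_univ S, rfl, fun i _ => hS i⟩
    have hle := Nat.sInf_le hmem
    rw [transversalNum] at htau
    rw [htau] at hle
    exact hle
  have hedge := edge_exists p M hp hM hpM hcover hlow
  have h0 : 0 < ℓ := by omega
  obtain ⟨x, hx⟩ : (p ⟨0, h0⟩).Nonempty := by rw [← Finset.card_pos, hp ⟨0, h0⟩]; omega
  set T := insert x (M ⟨0, h0⟩) with hTdef
  have hT : ∀ i, (T ∩ p i).Nonempty := by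
    intro i
    by_cases hik : i = ⟨0, h0⟩
    · exact ⟨x, Finset.mem_inter.mpr ⟨Finset.mem_insert_self _ _, hik ▸ hx⟩⟩
    · have hne : (p i ∩ M ⟨0, h0⟩).Nonempty :=
        Finset.nonempty_iff_ne_empty.mpr (fun e => hik ((hpM i ⟨0, h0⟩).mp e))
      obtain ⟨u, hu⟩ := hne
      rw [Finset.mem_inter] at hu
      exact ⟨u, Finset.mem_inter.mpr ⟨Finset.mem_insert_of_mem hu.2, hu.1⟩⟩
  have hTcard : T.card ≤ m + 1 := by
    have hc := Finset.card_insert_le x (M ⟨0, h0⟩)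
    rw [hM ⟨0, h0⟩] at hc
    rw [hTdef]
    omega
  set I := (Finset.univ : Finset α) \ T with hIdef
  have hIT : Disjoint I T := Finset.sdiff_disjoint
  have hIcard : I.card ≤ (NBset p I).card :=
    hall_step p M hp hM hpM hlow hedge T hT I.card I hIT le_rfl
  have hNBT : NBset p I ⊆ T := by
    intro t ht
    rw [mem_NBset] at ht
    obtain ⟨h, w, hwI, hne, hph⟩ := ht
    obtain ⟨u, hu⟩ := hT h
    rw [Finset.mem_inter, hph] at hu
    rcases Finset.mem_insert.mp hu.2 with rfl | h2
    · exact absurd hu.1 (Finset.disjoint_left.mp hIT hwI)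
    · rw [Finset.mem_singleton] at h2
      exact h2 ▸ hu.1
  have hIcard2 : I.card ≤ m + 1 :=
    le_trans hIcard (le_trans (Finset.card_le_card hNBT) hTcard)
  have hsplit : I.card + T.card = Fintype.card α := by
    rw [hIdef, Finset.card_sdiff_add_card_eq_card (Finset.subset_univ T), Finset.card_univ]
  constructor
  · omega
  · intro hm
    have hb : 2 * (m + 1) ≤ (m + 2).choose 2 := by
      rw [Nat.choose_two_right]
      rw [Nat.le_div_iff_mul_le (by norm_num : 0 < 2)]
      have e : m + 2 - 1 = m + 1 := by omega
      rw [e]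
      nlinarith
    omega
end

section
/- In an intersecting (2,m)-system covering V (with ℓ ≥ 3), if p_ℓ is an isolated edge of G (that is, p_ℓ ∩ p_h = ∅ for every h ≠ ℓ) and w(p_ℓ) = 0, then τ(G) = m + 1, τ(G − p_j) = m for every j (so G is τ-critical), and w(p_j) = 0 for every j, hence w(G) = 0. -/
open Finset

lemma tn_le {α ι : Type*} [DecidableEq α] {A : Finset α} {s : Finset ι} {q : ι → Finset α}
    (S : Finset α) (hS : S ⊆ A) (h : ∀ i ∈ s, (S ∩ q i).Nonempty) :
    transversalNum A s q ≤ S.card :=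
  Nat.sInf_le ⟨S, hS, rfl, h⟩

lemma tn_spec {α ι : Type*} [DecidableEq α] {A : Finset α} {s : Finset ι} {q : ι → Finset α}
    (S₀ : Finset α) (h₀ : S₀ ⊆ A) (h₁ : ∀ i ∈ s, (S₀ ∩ q i).Nonempty) :
    ∃ S : Finset α, S ⊆ A ∧ S.card = transversalNum A s q ∧ ∀ i ∈ s, (S ∩ q i).Nonempty := by
  have h : sInf {n : ℕ | ∃ S : Finset α, S ⊆ A ∧ S.card = n ∧ ∀ i ∈ s, (S ∩ q i).Nonempty}
      ∈ {n : ℕ | ∃ S : Finset α, S ⊆ A ∧ S.card = n ∧ ∀ i ∈ s, (S ∩ q i).Nonempty} :=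
    Nat.sInf_mem ⟨S₀.card, S₀, h₀, rfl, h₁⟩
  exact h

/-- isolated_zero_weight_edge -/
theorem isolated_zero_weight_edge {α : Type*} [Fintype α] [DecidableEq α]
    (m ℓ : ℕ) (hℓ : 3 ≤ ℓ)
    (p M : Fin ℓ → Finset α)
    (hp : ∀ i, (p i).card = 2)
    (hM : ∀ i, (M i).card = m)
    (hpM : ∀ i j, p i ∩ M j = ∅ ↔ i = j)
    (hcover : Finset.univ.biUnion M = (Finset.univ : Finset α))
    (jl : Fin ℓ) (hjl : (jl : ℕ) = ℓ - 1)
    (hiso : ∀ h : Fin ℓ, h ≠ jl → p h ∩ p jl = ∅)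
    (hw : (m : ℤ)
        - (transversalNum (Finset.univ \ p jl) (Finset.univ.erase jl) (fun h => p h \ p jl) : ℤ)
      = 0) :
    transversalNum (Finset.univ : Finset α) Finset.univ p = m + 1 ∧
    (∀ j : Fin ℓ, transversalNum (Finset.univ : Finset α) (Finset.univ.erase j) p = m) ∧
    (∀ j : Fin ℓ, (m : ℤ)
        - (transversalNum (Finset.univ \ p j) (Finset.univ.erase j) (fun h => p h \ p j) : ℤ)
      = 0) ∧
    ∑ j : Fin ℓ, ((m : ℤ)
        - (transversalNum (Finset.univ \ p j) (Finset.univ.erase j) (fun h => p h \ p j) : ℤ))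
      = 0 := by
  -- basic facts
  have hMp : ∀ (j : Fin ℓ) (x : α), x ∈ M j → x ∉ p j := by
    intro j x hx hc
    have : x ∈ p j ∩ M j := mem_inter.mpr ⟨hc, hx⟩
    rw [(hpM j j).mpr rfl] at this
    exact notMem_empty x this
  have hpMne : ∀ i j : Fin ℓ, i ≠ j → (p i ∩ M j).Nonempty := fun i j hij =>
    nonempty_iff_ne_empty.mpr (fun h => hij ((hpM i j).mp h))
  have hMsub : ∀ j : Fin ℓ, M j ⊆ univ \ p j := by
    intro j x hx
    exact mem_sdiff.mpr ⟨mem_univ x, hMp j x hx⟩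
  -- M j is a truncated transversal avoiding p j
  have hMtrunc : ∀ j : Fin ℓ, ∀ h ∈ univ.erase j, ((M j) ∩ (p h \ p j)).Nonempty := by
    intro j h hh
    rw [mem_erase] at hh
    obtain ⟨x, hx⟩ := hpMne h j hh.1
    rw [mem_inter] at hx
    exact ⟨x, mem_inter.mpr ⟨hx.2, mem_sdiff.mpr ⟨hx.1, hMp j x hx.2⟩⟩⟩
  -- M j is a transversal of G - p j
  have hMtrans : ∀ j : Fin ℓ, ∀ h ∈ univ.erase j, ((M j) ∩ p h).Nonempty := by
    intro j h hh
    rw [mem_erase] at hh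
    obtain ⟨x, hx⟩ := hpMne h j hh.1
    rw [mem_inter] at hx
    exact ⟨x, mem_inter.mpr ⟨hx.2, hx.1⟩⟩
  -- (1) u j ≤ m
  have hu_le : ∀ j : Fin ℓ,
      transversalNum (univ \ p j) (univ.erase j) (fun h => p h \ p j) ≤ m := by
    intro j
    have := tn_le (M j) (hMsub j) (hMtrunc j)
    rwa [hM j] at this
  -- (2) t j ≤ m
  have ht_le : ∀ j : Fin ℓ,
      transversalNum (univ : Finset α) (univ.erase j) p ≤ m := by
    intro j
    have := tn_le (M j) (subset_univ _) (hMtrans j)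
    rwa [hM j] at this
  -- p j nonempty
  have hpne : ∀ j : Fin ℓ, (p j).Nonempty := fun j =>
    card_pos.mp (by rw [hp j]; norm_num)
  obtain ⟨xl, hxl⟩ := hpne jl
  -- (3) T ≤ m + 1
  have hT_le : transversalNum (univ : Finset α) univ p ≤ m + 1 := by
    have hmeet : ∀ h ∈ (univ : Finset (Fin ℓ)), ((insert xl (M jl)) ∩ p h).Nonempty := by
      intro h _
      by_cases hc : h = jl
      · exact ⟨xl, mem_inter.mpr ⟨mem_insert_self _ _, hc ▸ hxl⟩⟩
      · obtain ⟨x, hx⟩ := hpMne h jl hc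
        rw [mem_inter] at hx
        exact ⟨x, mem_inter.mpr ⟨mem_insert_of_mem hx.2, hx.1⟩⟩
    calc transversalNum (univ : Finset α) univ p ≤ (insert xl (M jl)).card :=
          tn_le _ (subset_univ _) hmeet
      _ ≤ (M jl).card + 1 := card_insert_le _ _
      _ = m + 1 := by rw [hM jl]
  -- (4) u jl = m
  have hul : transversalNum (univ \ p jl) (univ.erase jl) (fun h => p h \ p jl) = m := by
    omega
  -- (5) t jl = m
  have htl : transversalNum (univ : Finset α) (univ.erase jl) p = m := by
    refine le_antisymm (ht_le jl) ?_
    obtain ⟨S, _, hScard, hSmeet⟩ := tn_spec (M jl) (subset_univ _) (hMtrans jl)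
    have key : transversalNum (univ \ p jl) (univ.erase jl) (fun h => p h \ p jl)
        ≤ (S \ p jl).card := by
      refine tn_le _ ?_ ?_
      · intro x hx
        rw [mem_sdiff] at hx
        exact mem_sdiff.mpr ⟨mem_univ x, hx.2⟩
      · intro h hh
        obtain ⟨x, hx⟩ := hSmeet h hh
        rw [mem_inter] at hx
        have hxnpl : x ∉ p jl := by
          rw [mem_erase] at hh
          intro hc
          have : x ∈ p h ∩ p jl := mem_inter.mpr ⟨hx.2, hc⟩
          rw [hiso h hh.1] at this
          exact notMem_empty x this
        exact ⟨x, mem_inter.mpr ⟨mem_sdiff.mpr ⟨hx.1, hxnpl⟩, mem_sdiff.mpr ⟨hx.2, hxnpl⟩⟩⟩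
    have := card_le_card (sdiff_subset : S \ p jl ⊆ S)
    omega
  -- (6) T = m + 1
  have hT : transversalNum (univ : Finset α) univ p = m + 1 := by
    refine le_antisymm hT_le ?_
    have hw1 : ∀ h ∈ (univ : Finset (Fin ℓ)), ((insert xl (M jl)) ∩ p h).Nonempty := by
      intro h _
      by_cases hc : h = jl
      · exact ⟨xl, mem_inter.mpr ⟨mem_insert_self _ _, hc ▸ hxl⟩⟩
      · obtain ⟨x, hx⟩ := hpMne h jl hc
        rw [mem_inter] at hx
        exact ⟨x, mem_inter.mpr ⟨mem_insert_of_mem hx.2, hx.1⟩⟩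
    obtain ⟨S, _, hScard, hSmeet⟩ := tn_spec (insert xl (M jl)) (subset_univ _) hw1
    obtain ⟨y, hy⟩ := hSmeet jl (mem_univ jl)
    rw [mem_inter] at hy
    have hsub : S \ p jl ⊆ S.erase y := by
      intro x hx
      rw [mem_sdiff] at hx
      exact mem_erase.mpr ⟨fun hc => hx.2 (hc ▸ hy.2), hx.1⟩
    have key : transversalNum (univ : Finset α) (univ.erase jl) p ≤ (S \ p jl).card := by
      refine tn_le _ (subset_univ _) ?_
      intro h hh
      obtain ⟨x, hx⟩ := hSmeet h (mem_univ h)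
      rw [mem_inter] at hx
      rw [mem_erase] at hh
      have hxnpl : x ∉ p jl := by
        intro hc
        have : x ∈ p h ∩ p jl := mem_inter.mpr ⟨hx.2, hc⟩
        rw [hiso h hh.1] at this
        exact notMem_empty x this
      exact ⟨x, mem_inter.mpr ⟨mem_sdiff.mpr ⟨hx.1, hxnpl⟩, hx.2⟩⟩
    have h1 := card_le_card hsub
    have h2 : (S.erase y).card = S.card - 1 := card_erase_of_mem hy.1
    have h3 : 1 ≤ S.card := card_pos.mpr ⟨y, hy.1⟩
    omega
  -- (7) t j = m for all j
  have ht : ∀ j : Fin ℓ, transversalNum (univ : Finset α) (univ.erase j) p = m := by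
    intro j
    refine le_antisymm (ht_le j) ?_
    obtain ⟨S, _, hScard, hSmeet⟩ := tn_spec (M j) (subset_univ _) (hMtrans j)
    obtain ⟨x, hx⟩ := hpne j
    have key : transversalNum (univ : Finset α) univ p ≤ (insert x S).card := by
      refine tn_le _ (subset_univ _) ?_
      intro h _
      by_cases hc : h = j
      · exact ⟨x, mem_inter.mpr ⟨mem_insert_self _ _, hc ▸ hx⟩⟩
      · obtain ⟨z, hz⟩ := hSmeet h (mem_erase.mpr ⟨hc, mem_univ h⟩)
        rw [mem_inter] at hz
        exact ⟨z, mem_inter.mpr ⟨mem_insert_of_mem hz.1, hz.2⟩⟩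
    have := card_insert_le x S
    omega
  -- (8) u j = m for all j
  have hu : ∀ j : Fin ℓ,
      transversalNum (univ \ p j) (univ.erase j) (fun h => p h \ p j) = m := by
    intro j
    refine le_antisymm (hu_le j) ?_
    obtain ⟨S, hSsub, hScard, hSmeet⟩ := tn_spec (M j) (hMsub j) (hMtrunc j)
    have key : transversalNum (univ : Finset α) (univ.erase j) p ≤ S.card := by
      refine tn_le _ (subset_univ _) ?_
      intro h hh
      obtain ⟨z, hz⟩ := hSmeet h hh
      rw [mem_inter, mem_sdiff] at hz
      exact ⟨z, mem_inter.mpr ⟨hz.1, hz.2.1⟩⟩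
    have := ht j
    omega
  refine ⟨hT, ht, fun j => by rw [hu j]; ring, ?_⟩
  simp only [fun j : Fin ℓ => hu j]
  simp
end

section
/- In an intersecting (2,m)-system covering V (with ℓ ≥ 3), suppose w(p_ℓ) = 0 and p_ℓ is a pendant edge of G, i.e., exactly one of the two vertices of p_ℓ belongs to some other edge p_h (h ≠ ℓ). Then for every i ≠ ℓ with p_i ∩ p_ℓ ≠ ∅ one has τ(G′∖p_i) = τ(G∖p_i) − 1, i.e., w′(p_i) = w(p_i) + 1, where G′ = G − p_ℓ; consequently w(G′) ≥ w(G) + 1. -/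
open Finset

lemma transversal_exists {α ι : Type*} [DecidableEq α]
    (A : Finset α) (s : Finset ι) (q : ι → Finset α)
    (h : ∀ i ∈ s, (A ∩ q i).Nonempty) :
    ∃ S : Finset α, S ⊆ A ∧ S.card = transversalNum A s q ∧
      ∀ i ∈ s, (S ∩ q i).Nonempty := by
  have hne : {n : ℕ | ∃ S : Finset α, S ⊆ A ∧ S.card = n ∧
      ∀ i ∈ s, (S ∩ q i).Nonempty}.Nonempty :=
    ⟨A.card, A, Finset.Subset.rfl, rfl, h⟩
  obtain ⟨S, h1, h2, h3⟩ := Nat.sInf_mem hne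
  exact ⟨S, h1, h2, h3⟩

lemma transversal_le {α ι : Type*} [DecidableEq α]
    (A : Finset α) (s : Finset ι) (q : ι → Finset α) (S : Finset α)
    (h1 : S ⊆ A) (h3 : ∀ i ∈ s, (S ∩ q i).Nonempty) :
    transversalNum A s q ≤ S.card :=
  Nat.sInf_le ⟨S, h1, rfl, h3⟩

/-- pendant_zero_weight_edge -/
theorem pendant_zero_weight_edge {α : Type*} [Fintype α] [DecidableEq α]
    (m ℓ : ℕ) (hℓ : 3 ≤ ℓ)
    (p M : Fin ℓ → Finset α)
    (hp : ∀ i, (p i).card = 2)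
    (hM : ∀ i, (M i).card = m)
    (hpM : ∀ i j, p i ∩ M j = ∅ ↔ i = j)
    (hcover : Finset.univ.biUnion M = (Finset.univ : Finset α))
    (jl : Fin ℓ) (hjl : (jl : ℕ) = ℓ - 1)
    (hw : (m : ℤ)
        - (transversalNum (Finset.univ \ p jl) (Finset.univ.erase jl) (fun h => p h \ p jl) : ℤ)
      = 0)
    (hpendant : ∃! v : α, v ∈ p jl ∧ ∃ h : Fin ℓ, h ≠ jl ∧ v ∈ p h) :
    (∀ i : Fin ℓ, i ≠ jl → (p i ∩ p jl).Nonempty →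
      (transversalNum (Finset.univ \ p i) ((Finset.univ.erase jl).erase i)
          (fun h => p h \ p i) : ℤ)
        = (transversalNum (Finset.univ \ p i) (Finset.univ.erase i) (fun h => p h \ p i) : ℤ)
            - 1) ∧
    (∑ j : Fin ℓ, ((m : ℤ)
        - (transversalNum (Finset.univ \ p j) (Finset.univ.erase j) (fun h => p h \ p j) : ℤ)))
        + 1
      ≤ ∑ i ∈ Finset.univ.erase jl, ((m : ℤ)
          - (transversalNum (Finset.univ \ p i) ((Finset.univ.erase jl).erase i)
              (fun h => p h \ p i) : ℤ)) := by
  classical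
  -- edges are pairwise distinct
  have hpne : ∀ i h : Fin ℓ, h ≠ i → p h ≠ p i := by
    intro i h hhi heq
    apply hhi
    rw [← hpM h i, heq, hpM i i]
  -- p h \ p i is nonempty for h ≠ i
  have hdiffne : ∀ i h : Fin ℓ, h ≠ i → (p h \ p i).Nonempty := by
    intro i h hhi
    rw [Finset.sdiff_nonempty]
    intro hsub
    exact hpne i h hhi (Finset.eq_of_subset_of_card_le hsub (by rw [hp, hp]))
  -- full ground set works as a transversal candidate
  have hAhits : ∀ (i : Fin ℓ) (s : Finset (Fin ℓ)), (∀ h ∈ s, h ≠ i) →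
      ∀ h ∈ s, ((Finset.univ \ p i) ∩ (p h \ p i)).Nonempty := by
    intro i s hs h hh
    obtain ⟨x, hx⟩ := hdiffne i h (hs h hh)
    exact ⟨x, Finset.mem_inter.2 ⟨Finset.mem_sdiff.2 ⟨Finset.mem_univ x,
      (Finset.mem_sdiff.1 hx).2⟩, hx⟩⟩
  obtain ⟨v, ⟨hvjl, hvother⟩, hvuniq⟩ := hpendant
  -- the other vertex u of p jl
  obtain ⟨u, hujl, huv⟩ := Finset.exists_mem_ne
    (show 1 < (p jl).card by rw [hp jl]; norm_num) v
  -- u belongs to no other edge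
  have huonly : ∀ h : Fin ℓ, h ≠ jl → u ∉ p h := by
    intro h hh hu
    exact huv (hvuniq u ⟨hujl, h, hh, hu⟩)
  -- p jl = {u, v}
  have hpjl : p jl = {u, v} := by
    symm
    apply Finset.eq_of_subset_of_card_le
    · intro x hx
      rcases Finset.mem_insert.1 hx with h | h
      · rwa [h]
      · rw [Finset.mem_singleton.1 h]; exact hvjl
    · rw [hp, Finset.card_insert_of_notMem (by simp [huv]), Finset.card_singleton]
  -- Part 1
  have part1 : ∀ i : Fin ℓ, i ≠ jl → (p i ∩ p jl).Nonempty →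
      transversalNum (Finset.univ \ p i) ((Finset.univ.erase jl).erase i)
          (fun h => p h \ p i) + 1
        = transversalNum (Finset.univ \ p i) (Finset.univ.erase i) (fun h => p h \ p i) := by
    intro i hij hint
    obtain ⟨w, hw2⟩ := hint
    have hwv : w = v := hvuniq w ⟨(Finset.mem_inter.1 hw2).2, i, hij, (Finset.mem_inter.1 hw2).1⟩
    have hvpi : v ∈ p i := by rw [← hwv]; exact (Finset.mem_inter.1 hw2).1
    have hupi : u ∉ p i := huonly i hij
    have hdiffjl : p jl \ p i = {u} := by
      rw [hpjl]
      ext x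
      simp only [Finset.mem_sdiff, Finset.mem_insert, Finset.mem_singleton]
      constructor
      · rintro ⟨h | h, hnpi⟩
        · exact h
        · exact absurd (h ▸ hvpi) hnpi
      · rintro rfl; exact ⟨Or.inl rfl, hupi⟩
    set τG := transversalNum (Finset.univ \ p i) (Finset.univ.erase i) (fun h => p h \ p i)
      with hτG
    set τG' := transversalNum (Finset.univ \ p i) ((Finset.univ.erase jl).erase i)
      (fun h => p h \ p i) with hτG'
    -- upper: τG' ≤ τG - 1
    obtain ⟨S, hS1, hS2, hS3⟩ := transversal_exists (Finset.univ \ p i) (Finset.univ.erase i)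
      (fun h => p h \ p i) (hAhits i _ (fun h hh => (Finset.mem_erase.1 hh).1))
    have hjlmem : jl ∈ Finset.univ.erase i := Finset.mem_erase.2 ⟨Ne.symm hij, Finset.mem_univ _⟩
    have huS : u ∈ S := by
      obtain ⟨x, hx⟩ := hS3 jl hjlmem
      have := (Finset.mem_inter.1 hx).2
      rw [hdiffjl] at this
      rw [← Finset.mem_singleton.1 this]
      exact (Finset.mem_inter.1 hx).1
    have hle1 : τG' ≤ S.card - 1 := by
      have := transversal_le (Finset.univ \ p i) ((Finset.univ.erase jl).erase i)
        (fun h => p h \ p i) (S.erase u)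
        (fun x hx => hS1 (Finset.mem_of_mem_erase hx))
        (by
          intro h hh
          have hhjl : h ≠ jl := (Finset.mem_erase.1 (Finset.mem_of_mem_erase hh)).1
          have hhi : h ≠ i := (Finset.mem_erase.1 hh).1
          obtain ⟨x, hx⟩ := hS3 h (Finset.mem_erase.2 ⟨hhi, Finset.mem_univ _⟩)
          refine ⟨x, Finset.mem_inter.2 ⟨Finset.mem_erase.2 ⟨?_, (Finset.mem_inter.1 hx).1⟩,
            (Finset.mem_inter.1 hx).2⟩⟩
          intro hxu
          exact huonly h hhjl (hxu ▸ (Finset.mem_sdiff.1 (Finset.mem_inter.1 hx).2).1))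
      rwa [Finset.card_erase_of_mem huS] at this
    have hcardpos : 1 ≤ S.card := Finset.card_pos.2 ⟨u, huS⟩
    -- lower: τG ≤ τG' + 1
    obtain ⟨S', hS'1, hS'2, hS'3⟩ := transversal_exists (Finset.univ \ p i)
      ((Finset.univ.erase jl).erase i) (fun h => p h \ p i)
      (hAhits i _ (fun h hh => (Finset.mem_erase.1 hh).1))
    have huS' : u ∉ S' := by
      intro hu
      have := transversal_le (Finset.univ \ p i) ((Finset.univ.erase jl).erase i)
        (fun h => p h \ p i) (S'.erase u)
        (fun x hx => hS'1 (Finset.mem_of_mem_erase hx))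
        (by
          intro h hh
          have hhjl : h ≠ jl := (Finset.mem_erase.1 (Finset.mem_of_mem_erase hh)).1
          obtain ⟨x, hx⟩ := hS'3 h hh
          refine ⟨x, Finset.mem_inter.2 ⟨Finset.mem_erase.2 ⟨?_, (Finset.mem_inter.1 hx).1⟩,
            (Finset.mem_inter.1 hx).2⟩⟩
          intro hxu
          exact huonly h hhjl (hxu ▸ (Finset.mem_sdiff.1 (Finset.mem_inter.1 hx).2).1))
      rw [Finset.card_erase_of_mem hu, hS'2] at this
      have hpos : 1 ≤ S'.card := Finset.card_pos.2 ⟨u, hu⟩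
      omega
    have hle2 : τG ≤ τG' + 1 := by
      have := transversal_le (Finset.univ \ p i) (Finset.univ.erase i)
        (fun h => p h \ p i) (insert u S')
        (by
          intro x hx
          rcases Finset.mem_insert.1 hx with h | h
          · exact h ▸ Finset.mem_sdiff.2 ⟨Finset.mem_univ u, hupi⟩
          · exact hS'1 h)
        (by
          intro h hh
          by_cases hhjl : h = jl
          · refine ⟨u, Finset.mem_inter.2 ⟨Finset.mem_insert_self u S', ?_⟩⟩
            show u ∈ p h \ p i
            rw [hhjl, hdiffjl]
            exact Finset.mem_singleton_self u
          · obtain ⟨x, hx⟩ := hS'3 h (Finset.mem_erase.2 ⟨(Finset.mem_erase.1 hh).1,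
              Finset.mem_erase.2 ⟨hhjl, Finset.mem_univ _⟩⟩)
            exact ⟨x, Finset.mem_inter.2 ⟨Finset.mem_insert_of_mem (Finset.mem_inter.1 hx).1,
              (Finset.mem_inter.1 hx).2⟩⟩)
      rwa [Finset.card_insert_of_notMem huS', hS'2] at this
    omega
  constructor
  · intro i hij hint
    have := part1 i hij hint
    push_cast [← this]
    ring
  -- Part 2: the sum inequality
  · -- monotonicity for every i ≠ jl
    have hmono : ∀ i : Fin ℓ, i ≠ jl →
        transversalNum (Finset.univ \ p i) ((Finset.univ.erase jl).erase i)
            (fun h => p h \ p i)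
          ≤ transversalNum (Finset.univ \ p i) (Finset.univ.erase i) (fun h => p h \ p i) := by
      intro i hij
      obtain ⟨S, hS1, hS2, hS3⟩ := transversal_exists (Finset.univ \ p i) (Finset.univ.erase i)
        (fun h => p h \ p i) (hAhits i _ (fun h hh => (Finset.mem_erase.1 hh).1))
      rw [← hS2]
      exact transversal_le _ _ _ S hS1
        (fun h hh => hS3 h (Finset.mem_erase.2 ⟨(Finset.mem_erase.1 hh).1, Finset.mem_univ _⟩))
    -- an edge meeting p jl exists
    obtain ⟨i0, hi0jl, hvi0⟩ := hvother
    have hi0int : (p i0 ∩ p jl).Nonempty := ⟨v, Finset.mem_inter.2 ⟨hvi0, hvjl⟩⟩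
    have hkey := part1 i0 hi0jl hi0int
    -- split the sum over univ at jl
    rw [← Finset.add_sum_erase Finset.univ _ (Finset.mem_univ jl), hw, zero_add]
    have hsum : ∑ i ∈ Finset.univ.erase jl, ((m : ℤ)
          - (transversalNum (Finset.univ \ p i) (Finset.univ.erase i) (fun h => p h \ p i) : ℤ))
        < ∑ i ∈ Finset.univ.erase jl, ((m : ℤ)
          - (transversalNum (Finset.univ \ p i) ((Finset.univ.erase jl).erase i)
              (fun h => p h \ p i) : ℤ)) := by
      apply Finset.sum_lt_sum
      · intro i hi
        have := hmono i (Finset.mem_erase.1 hi).1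
        omega
      · refine ⟨i0, Finset.mem_erase.2 ⟨hi0jl, Finset.mem_univ _⟩, ?_⟩
        omega
    exact Int.add_one_le_iff.2 hsum
end

section
/- There exists a 3-uniform hypergraph H of order n = 15 with clique number ω(H) = n − 4 = 11 such that the intersection of all maximum cliques of H is empty; hence the bound n ≤ (4+2 choose 2) = 15 in the Szemerédi–Petruska conjecture is attained for m = 4. -/
set_option maxRecDepth 10000

namespace SPaux

/-- The ten 4-sets whose complements are the designated maximum cliques. -/
def Tlist : List (Finset (Fin 15)) :=
  [{0,1,2,6}, {1,3,7,10}, {5,6,7,10}, {1,2,9,10}, {2,6,7,12},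
   {1,2,4,7}, {1,6,7,8}, {1,6,10,11}, {2,6,10,13}, {2,7,10,14}]

/-- The edge set: all triples contained in the complement of some `T ∈ Tlist`. -/
def Edges : Finset (Finset (Fin 15)) :=
  (Finset.univ.powersetCard 3).filter
    (fun e => ∃ T ∈ Tlist, e ⊆ Finset.univ \ T)

/-- The 20 "forbidden" triples: triples meeting every member of `Tlist`. -/
def Glist : List (Finset (Fin 15)) :=
  [{0,7,10}, {1,2,5}, {1,2,6}, {1,2,7}, {1,2,10}, {1,6,7}, {1,6,10},
   {1,6,14}, {1,7,10}, {1,7,13}, {1,10,12}, {2,3,6}, {2,6,7}, {2,6,10},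
   {2,7,10}, {2,7,11}, {2,8,10}, {4,6,10}, {6,7,9}, {6,7,10}]

lemma glist_bool :
    (Glist.all (fun g => g.card == 3 &&
      Tlist.all (fun T => decide ((g ∩ T).Nonempty)))) = true := by rfl

lemma glist_prop : ∀ g ∈ Glist, g.card = 3 ∧ ∀ T ∈ Tlist, (g ∩ T).Nonempty := by
  have h := glist_bool
  simp only [List.all_eq_true, Bool.and_eq_true, beq_iff_eq, decide_eq_true_eq] at h
  exact h

lemma key_bool :
    ((List.finRange 15).all (fun a => (List.finRange 15).all (fun b =>
      (List.finRange 15).all (fun c => Glist.any (fun g =>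
        decide (a ∉ g) && decide (b ∉ g) && decide (c ∉ g)))))) = true := by rfl

lemma key' : ∀ a b c : Fin 15, ∃ g ∈ Glist, a ∉ g ∧ b ∉ g ∧ c ∉ g := by
  have h := key_bool
  simp only [List.all_eq_true, List.any_eq_true, Bool.and_eq_true,
    decide_eq_true_eq] at h
  intro a b c
  obtain ⟨g, hg, ⟨h1, h2⟩, h3⟩ :=
    h a (List.mem_finRange a) b (List.mem_finRange b) c (List.mem_finRange c)
  exact ⟨g, hg, h1, h2, h3⟩

lemma key : ∀ S : Finset (Fin 15), S.card = 12 → ∃ g ∈ Glist, g ⊆ S := by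
  intro S hS
  have hc : (Finset.univ \ S).card = 3 := by
    rw [Finset.card_sdiff_of_subset (Finset.subset_univ S), Finset.card_univ, hS,
      Fintype.card_fin]
  obtain ⟨a, b, c, _, _, _, habc⟩ := Finset.card_eq_three.mp hc
  obtain ⟨g, hg, h1, h2, h3⟩ := key' a b c
  refine ⟨g, hg, fun v hv => ?_⟩
  by_contra hvS
  have : v ∈ Finset.univ \ S := Finset.mem_sdiff.mpr ⟨Finset.mem_univ v, hvS⟩
  rw [habc] at this
  simp only [Finset.mem_insert, Finset.mem_singleton] at this
  rcases this with rfl | rfl | rfl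
  · exact h1 hv
  · exact h2 hv
  · exact h3 hv

lemma tcard_bool : (Tlist.all (fun T => T.card == 4)) = true := by rfl

lemma comp_card : ∀ T ∈ Tlist, (Finset.univ \ T).card = 11 := by
  have h := tcard_bool
  simp only [List.all_eq_true, beq_iff_eq] at h
  intro T hT
  rw [Finset.card_sdiff_of_subset (Finset.subset_univ T), Finset.card_univ, h T hT]
  rfl

lemma cover_bool :
    ((List.finRange 15).all (fun v => Tlist.any (fun T => decide (v ∈ T)))) = true := by rfl

lemma cover : ∀ v : Fin 15, ∃ T ∈ Tlist, v ∈ T := by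
  have h := cover_bool
  simp only [List.all_eq_true, List.any_eq_true, decide_eq_true_eq] at h
  intro v
  exact h v (List.mem_finRange v)

lemma comp_clique : ∀ T ∈ Tlist, IsClique3 Edges (Finset.univ \ T) := by
  intro T hT t ht hcard
  exact Finset.mem_filter.mpr
    ⟨Finset.mem_powersetCard.mpr ⟨Finset.subset_univ _, hcard⟩, T, hT, ht⟩

lemma upper : ∀ S : Finset (Fin 15), IsClique3 Edges S → S.card ≤ 11 := by
  intro S hS
  by_contra h
  push_neg at h
  have h12 : 12 ≤ S.card := h
  obtain ⟨S', hS'sub, hS'card⟩ := Finset.exists_subset_card_eq h12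
  obtain ⟨g, hgG, hgsub⟩ := key S' hS'card
  obtain ⟨hg3, hgT⟩ := glist_prop g hgG
  have hgE : g ∈ Edges := hS g (hgsub.trans hS'sub) hg3
  obtain ⟨T, hT, hsub⟩ := (Finset.mem_filter.mp hgE).2
  obtain ⟨v, hv⟩ := hgT T hT
  have hvg : v ∈ g := (Finset.mem_inter.mp hv).1
  have hvT : v ∈ T := (Finset.mem_inter.mp hv).2
  exact (Finset.mem_sdiff.mp (hsub hvg)).2 hvT

end SPaux

/-- There is a 3-uniform hypergraph of order `n = 15` with clique number
`ω(H) = n − 4 = 11` whose maximum cliques have empty intersection; so the bound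
`n ≤ (4+2 choose 2) = 15` of the Szemerédi–Petruska conjecture is attained for `m = 4`. -/
theorem szemeredi_petruska_sharp_m_four :
    (∃ (α : Type) (inst : Fintype α) (E : Finset (Finset α)),
      (∀ e ∈ E, e.card = 3) ∧
      @Fintype.card α inst = 15 ∧
      (∃ S : Finset α, IsClique3 E S ∧ S.card = 11) ∧
      (∀ S : Finset α, IsClique3 E S → S.card ≤ 11) ∧
      (∀ v : α, ∃ S : Finset α, IsClique3 E S ∧ S.card = 11 ∧ v ∉ S)) ∧
    (4 + 2).choose 2 = 15 := by
  constructor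
  · refine ⟨Fin 15, inferInstance, SPaux.Edges, ?_, by simp, ?_, SPaux.upper, ?_⟩
    · intro e he
      exact (Finset.mem_powersetCard.mp (Finset.mem_filter.mp he).1).2
    · exact ⟨Finset.univ \ ({0,1,2,6} : Finset (Fin 15)),
        SPaux.comp_clique _ (by simp [SPaux.Tlist]),
        SPaux.comp_card _ (by simp [SPaux.Tlist])⟩
    · intro v
      obtain ⟨T, hT, hvT⟩ := SPaux.cover v
      exact ⟨Finset.univ \ T, SPaux.comp_clique T hT, SPaux.comp_card T hT,
        by simp [hvT]⟩
  · rfl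
end
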